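/- arXiv:1301.1881 — 2 statements merged into one kernel-verified Lean document; each statement's English description precedes it below -/
import Mathlib

section
/- Let d ∈ ℕ and let 0 < b < B ≤ d. Then there exists a compact set C ⊆ [0,1]^d such that lb-dim C = b, ub-dim C = B, and the covering regularity exponent satisfies p_t(C) = 0 for all t ≥ b. -/
open Set Filter Topology Metric MeasureTheory

/-- Minimum number of sets of diameter at most `δ` needed to cover `F`. -/
noncomputable def coverN {X : Type*} [MetricSpace X] (F : Set X) (δ : ℝ) : ℕ :=
  sInf {n : ℕ | ∃ U : Fin n → Set X, (∀ i, EMetric.diam (U i) ≤ ENNReal.ofReal δ) ∧ F ⊆ ⋃ i, U i}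

/-- Lower box dimension. -/
noncomputable def lbDim {X : Type*} [MetricSpace X] (F : Set X) : ℝ :=
  Filter.liminf (fun δ : ℝ => Real.log (coverN F δ) / (-Real.log δ)) (𝓝[>] 0)

/-- Upper box dimension. -/
noncomputable def ubDim {X : Type*} [MetricSpace X] (F : Set X) : ℝ :=
  Filter.limsup (fun δ : ℝ => Real.log (coverN F δ) / (-Real.log δ)) (𝓝[>] 0)

/-- The `(t,δ)`-covering regularity exponent `p_{t,δ}(C)`. -/
noncomputable def cre {X : Type*} [MetricSpace X] (C : Set X) (t δ : ℝ) : ℝ :=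
  sSup {p : ℝ | 0 ≤ p ∧ p ≤ 1 ∧ δ ^ (-(p * t)) ≤ (coverN C (δ ^ p) : ℝ)}

/-- The `t`-covering regularity exponent `p_t(C)`. -/
noncomputable def creT {X : Type*} [MetricSpace X] (C : Set X) (t : ℝ) : ℝ :=
  Filter.liminf (fun δ : ℝ => cre C t δ) (𝓝[>] 0)


namespace CondProof

noncomputable def wseq (d : ℕ) (b B : ℝ) : ℕ → ℕ
  | 0 => 1
  | (j+1) => (j+2) * ((⌈((((j+2) * wseq d b B j : ℕ) : ℝ) * B + (((j+1) : ℕ) : ℝ))/b⌉₊ + (j+2) * wseq d b B j + 1) + d + 1)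

/-- `mseq k` for `k = j+1` is the end of the fast phase; `mseq 0 = 1`. -/
noncomputable def mseq (d : ℕ) (b B : ℝ) (k : ℕ) : ℕ := (k+1) * wseq d b B (k-1)

noncomputable def cseq (d : ℕ) (b B : ℝ) (k : ℕ) : ℕ :=
  ⌈((mseq d b B k : ℝ) * B + k)/b⌉₊ + mseq d b B k + 1

lemma mseq_succ (d : ℕ) (b B : ℝ) (j : ℕ) :
    mseq d b B (j+1) = (j+2) * wseq d b B j := by simp [mseq]

lemma wseq_succ (d : ℕ) (b B : ℝ) (j : ℕ) :
    wseq d b B (j+1) = (j+2) * (cseq d b B (j+1) + d + 1) := by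
  rw [wseq, cseq, mseq_succ]

lemma wseq_zero (d : ℕ) (b B : ℝ) : wseq d b B 0 = 1 := rfl

lemma wseq_pos (d : ℕ) (b B : ℝ) (k : ℕ) : 0 < wseq d b B k := by
  cases k with
  | zero => simp [wseq_zero]
  | succ j => rw [wseq_succ]; positivity

lemma mseq_pos (d : ℕ) (b B : ℝ) (k : ℕ) : 0 < mseq d b B k := by
  have := wseq_pos d b B (k-1); simp [mseq]; positivity

lemma mseq_lt_cseq (d : ℕ) (b B : ℝ) (k : ℕ) : mseq d b B k < cseq d b B k := by
  simp [cseq]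

lemma cseq_lt_wseq (d : ℕ) (b B : ℝ) (j : ℕ) : cseq d b B (j+1) < wseq d b B (j+1) := by
  rw [wseq_succ]; nlinarith [cseq d b B (j+1), (0:ℕ) ≤ d]

lemma wseq_lt_mseq_succ (d : ℕ) (b B : ℝ) (j : ℕ) : wseq d b B j < mseq d b B (j+1) := by
  rw [mseq_succ]; nlinarith [wseq_pos d b B j]

lemma wseq_strictMono (d : ℕ) (b B : ℝ) : StrictMono (wseq d b B) := by
  apply strictMono_nat_of_lt_succ
  intro j
  calc wseq d b B j < mseq d b B (j+1) := wseq_lt_mseq_succ d b B j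
    _ < cseq d b B (j+1) := mseq_lt_cseq d b B (j+1)
    _ < wseq d b B (j+1) := cseq_lt_wseq d b B j

lemma two_pow_le_wseq (d : ℕ) (b B : ℝ) (k : ℕ) : 2 ^ k ≤ wseq d b B k := by
  induction k with
  | zero => simp [wseq_zero]
  | succ j ih =>
    have h1 : mseq d b B (j+1) ≤ cseq d b B (j+1) := (mseq_lt_cseq d b B (j+1)).le
    have h2 : 2 * wseq d b B j ≤ mseq d b B (j+1) := by rw [mseq_succ]; nlinarith [wseq_pos d b B j]
    have h3 : cseq d b B (j+1) ≤ wseq d b B (j+1) := (cseq_lt_wseq d b B j).le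
    calc 2^(j+1) = 2 * 2^j := by ring
      _ ≤ 2 * wseq d b B j := by omega
      _ ≤ wseq d b B (j+1) := by omega

lemma self_le_wseq (d : ℕ) (b B : ℝ) (k : ℕ) : k ≤ wseq d b B k :=
  le_trans (Nat.lt_two_pow_self (n := k)).le (two_pow_le_wseq d b B k)

lemma kOf_ex (d : ℕ) (b B : ℝ) (n : ℕ) : ∃ k, n ≤ wseq d b B k := ⟨n, self_le_wseq d b B n⟩

noncomputable def kOf (d : ℕ) (b B : ℝ) (n : ℕ) : ℕ := Nat.find (kOf_ex d b B n)

lemma kOf_spec (d : ℕ) (b B : ℝ) (n : ℕ) : n ≤ wseq d b B (kOf d b B n) :=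
  Nat.find_spec (kOf_ex d b B n)

lemma kOf_min (d : ℕ) (b B : ℝ) {n k : ℕ} (h : k < kOf d b B n) : wseq d b B k < n := by
  have := Nat.find_min (kOf_ex d b B n) h
  omega

lemma kOf_eq (d : ℕ) (b B : ℝ) {n j : ℕ} (h1 : wseq d b B j < n) (h2 : n ≤ wseq d b B (j+1)) :
    kOf d b B n = j + 1 := by
  have ha : kOf d b B n ≤ j + 1 := Nat.find_le h2
  have hb : ¬ (kOf d b B n ≤ j) := by
    intro hc
    have := kOf_spec d b B n
    have := (wseq_strictMono d b B).monotone hc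
    omega
  omega

lemma kOf_mono (d : ℕ) (b B : ℝ) : Monotone (kOf d b B) := by
  intro x y hxy
  by_contra h
  push_neg at h
  have h1 : wseq d b B (kOf d b B y) < x := kOf_min d b B h
  have := kOf_spec d b B y
  omega

/-- the "cap" used by the greedy construction at step n. -/
noncomputable def cap (d : ℕ) (b B : ℝ) (n : ℕ) : ℝ :=
  if n ≤ mseq d b B (kOf d b B n) then n * B else n * b - kOf d b B n

open Classical in
noncomputable def gseq (d : ℕ) (b B : ℝ) : ℕ → ℕ
  | 0 => 0
  | (n+1) => gseq d b B n + if ((gseq d b B n : ℝ) + d ≤ cap d b B (n+1)) then d else 0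

lemma gseq_zero (d : ℕ) (b B : ℝ) : gseq d b B 0 = 0 := rfl

open Classical in
lemma gseq_succ (d : ℕ) (b B : ℝ) (n : ℕ) :
    gseq d b B (n+1) = gseq d b B n + if ((gseq d b B n : ℝ) + d ≤ cap d b B (n+1)) then d else 0 := rfl

lemma gseq_mono (d : ℕ) (b B : ℝ) : Monotone (gseq d b B) := by
  apply monotone_nat_of_le_succ
  intro n; rw [gseq_succ]; omega

lemma gseq_succ_le (d : ℕ) (b B : ℝ) (n : ℕ) : gseq d b B (n+1) ≤ gseq d b B n + d := by
  rw [gseq_succ]; split <;> omega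

end CondProof

namespace CondProof

section invariants
variable {d : ℕ} {b B : ℝ}

lemma hd_ge (hb : 0 < b) (hbB : b < B) (hBd : B ≤ d) : 1 ≤ d := by
  by_contra h
  push_neg at h
  interval_cases d <;> simp_all <;> linarith

lemma cap_le (hb : 0 < b) (hbB : b < B) (n : ℕ) : cap d b B n ≤ n * B := by
  rw [cap]
  split
  · exact le_rfl
  · nlinarith [Nat.cast_nonneg (α := ℝ) n, Nat.cast_nonneg (α := ℝ) (kOf d b B n)]

lemma cap_ge (hb : 0 < b) (hbB : b < B) (n : ℕ) :
    n * b - kOf d b B n ≤ cap d b B n := by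
  rw [cap]
  split
  · nlinarith [Nat.cast_nonneg (α := ℝ) n, Nat.cast_nonneg (α := ℝ) (kOf d b B n)]
  · exact le_rfl

lemma gseq_le (hb : 0 < b) (hbB : b < B) (n : ℕ) : (gseq d b B n : ℝ) ≤ n * B := by
  induction n with
  | zero => simp [gseq_zero]
  | succ n ih =>
    rw [gseq_succ]
    split
    · rename_i h
      push_cast
      calc (gseq d b B n : ℝ) + d ≤ cap d b B (n+1) := h
        _ ≤ (n+1) * B := by have := cap_le hb hbB (d := d) (n+1); push_cast at this ⊢; linarith
    · push_cast
      nlinarith [Nat.cast_nonneg (α := ℝ) n]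

lemma gseq_ge (hb : 0 < b) (hbB : b < B) (hBd : B ≤ d) (n : ℕ) :
    n * b - (kOf d b B n + 2*d) ≤ (gseq d b B n : ℝ) := by
  induction n with
  | zero =>
    simp [gseq_zero]
    nlinarith [Nat.cast_nonneg (α := ℝ) (kOf d b B 0), Nat.cast_nonneg (α := ℝ) d]
  | succ n ih =>
    have hk : (kOf d b B n : ℝ) ≤ kOf d b B (n+1) := by
      exact_mod_cast kOf_mono d b B (Nat.le_succ n)
    have hdb : b ≤ (d:ℝ) := le_trans hbB.le hBd
    rw [gseq_succ]
    split
    · rename_i h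
      push_cast
      linarith
    · rename_i h
      have h3 := lt_of_not_ge h
      have h2 := cap_ge hb hbB (d := d) (n+1)
      push_cast
      push_cast at h2 h3
      linarith


lemma kOf_fast {n j : ℕ} (h1 : wseq d b B j < n) (h2 : n ≤ mseq d b B (j+1)) :
    kOf d b B n = j + 1 ∧ cap d b B n = n * B := by
  have hm : mseq d b B (j+1) ≤ wseq d b B (j+1) :=
    le_trans (mseq_lt_cseq d b B (j+1)).le (cseq_lt_wseq d b B j).le
  have hk : kOf d b B n = j + 1 := kOf_eq d b B h1 (le_trans h2 hm)
  refine ⟨hk, ?_⟩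
  rw [cap, hk, if_pos h2]

lemma kOf_slow {n j : ℕ} (h1 : mseq d b B (j+1) < n) (h2 : n ≤ wseq d b B (j+1)) :
    kOf d b B n = j + 1 ∧ cap d b B n = n * b - (j+1) := by
  have h0 : wseq d b B j < n := lt_trans (wseq_lt_mseq_succ d b B j) h1
  have hk : kOf d b B n = j + 1 := kOf_eq d b B h0 h2
  refine ⟨hk, ?_⟩
  rw [cap, hk, if_neg (by omega)]
  push_cast
  ring

/-- lower bound for the greedy sequence during the fast phase. -/
lemma gseq_fast (hb : 0 < b) (hbB : b < B) (hBd : B ≤ d) (j : ℕ) :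
    ∀ n, wseq d b B j ≤ n → n ≤ mseq d b B (j+1) →
      ((n:ℝ) * B - 2*d ≤ gseq d b B n ∨ (d:ℝ) * (n - wseq d b B j) ≤ gseq d b B n) := by
  intro n
  induction n with
  | zero => intro h1 _; exact absurd h1 (by have := wseq_pos d b B j; omega)
  | succ n ih =>
    intro h1 h2
    rcases Nat.lt_or_ge n (wseq d b B j) with hn | hn
    · -- n + 1 = wseq j
      have : n + 1 = wseq d b B j := by omega
      right
      rw [this]
      simp
    · have hcap : cap d b B (n+1) = ((n:ℝ)+1) * B := by
        have h' := (kOf_fast (by omega) h2).2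
        push_cast at h'
        exact h' 
      have ihx := ih hn (le_trans (Nat.le_succ n) h2)
      rw [gseq_succ]
      split
      · rename_i h
        rcases ihx with hL | hR
        · left; push_cast; push_cast at hL; nlinarith
        · right; push_cast; push_cast at hR; nlinarith
      · rename_i h
        have h3 := lt_of_not_ge h
        rw [hcap] at h3
        left
        push_cast
        push_cast at h3
        have hd0 : (0:ℝ) ≤ d := Nat.cast_nonneg d
        simp only [add_zero]
        linarith

lemma gseq_at_m (hb : 0 < b) (hbB : b < B) (hBd : B ≤ d) (j : ℕ) :
    (mseq d b B (j+1) : ℝ) * B - (2*d + d * wseq d b B j) ≤ gseq d b B (mseq d b B (j+1)) := by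
  have h := gseq_fast hb hbB hBd j (mseq d b B (j+1)) (wseq_lt_mseq_succ d b B j).le le_rfl
  rcases h with hL | hR
  · nlinarith [Nat.cast_nonneg (α := ℝ) d, Nat.cast_nonneg (α := ℝ) (wseq d b B j)]
  · have hBd' : (0:ℝ) ≤ B := by linarith
    nlinarith [Nat.cast_nonneg (α := ℝ) (mseq d b B (j+1)), Nat.cast_nonneg (α := ℝ) (wseq d b B j)]

/-- aux for the good region : either good or value unchanged since `mseq`. -/
lemma gseq_slow_aux (hb : 0 < b) (hbB : b < B) (j : ℕ) :
    ∀ n, mseq d b B (j+1) ≤ n → n ≤ wseq d b B (j+1) →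
      ((gseq d b B n : ℝ) ≤ n * b - (j+1) ∨ gseq d b B n = gseq d b B (mseq d b B (j+1))) := by
  intro n
  induction n with
  | zero => intro h1 _; exact absurd h1 (by have := mseq_pos d b B (j+1); omega)
  | succ n ih =>
    intro h1 h2
    rcases Nat.lt_or_ge n (mseq d b B (j+1)) with hn | hn
    · have : n + 1 = mseq d b B (j+1) := by omega
      right; rw [this]
    · have hcap : cap d b B (n+1) = ((n:ℝ)+1) * b - ((j:ℝ)+1) := by
        have h' := (kOf_slow (by omega) h2).2
        push_cast at h'
        exact h' 
      have ihx := ih hn (le_trans (Nat.le_succ n) h2)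
      rw [gseq_succ]
      split
      · rename_i h
        left
        rw [hcap] at h
        push_cast; push_cast at h
        linarith
      · rename_i h
        rcases ihx with hL | hR
        · left; push_cast; push_cast at hL; linarith
        · right; simpa using hR

/-- the good region estimate: `g n ≤ n b - k` on `[cseq k, wseq k]`, `k = j+1`. -/
lemma gseq_good (hb : 0 < b) (hbB : b < B) (j : ℕ) :
    ∀ n, cseq d b B (j+1) ≤ n → n ≤ wseq d b B (j+1) →
      (gseq d b B n : ℝ) ≤ n * b - (j+1) := by
  intro n h1 h2
  have hmn : mseq d b B (j+1) ≤ n := le_trans (mseq_lt_cseq d b B (j+1)).le h1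
  rcases gseq_slow_aux hb hbB j n hmn h2 with hL | hR
  · exact hL
  · rw [hR]
    have hgm : (gseq d b B (mseq d b B (j+1)) : ℝ) ≤ mseq d b B (j+1) * B := gseq_le hb hbB _
    have hceil : ((mseq d b B (j+1) : ℝ) * B + (j+1))/b ≤ (⌈((mseq d b B (j+1) : ℝ) * B + (j+1))/b⌉₊ : ℝ) :=
      Nat.le_ceil _
    have hcs : (cseq d b B (j+1) : ℝ) = (⌈((mseq d b B (j+1) : ℝ) * B + (j+1))/b⌉₊ : ℝ) + mseq d b B (j+1) + 1 := by
      rw [cseq]; push_cast; ring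
    have hn : ((mseq d b B (j+1) : ℝ) * B + (j+1))/b ≤ n := by
      have h1' : (cseq d b B (j+1) : ℝ) ≤ n := by exact_mod_cast h1
      have := Nat.cast_nonneg (α := ℝ) (mseq d b B (j+1))
      linarith
    have := (div_le_iff₀ hb).mp hn
    push_cast
    linarith

end invariants

section geometry

variable (d : ℕ) (b B : ℝ)

noncomputable def βseq (n : ℕ) : ℕ := 2 ^ (gseq d b B (n+1) - gseq d b B n)

lemma βseq_pos (n : ℕ) : 0 < βseq d b B n := Nat.pow_pos (by norm_num)

lemma βseq_le (n : ℕ) : βseq d b B n ≤ 2 ^ d := by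
  have h1 := gseq_succ_le d b B n
  have h2 := gseq_mono d b B (Nat.le_succ n)
  exact Nat.pow_le_pow_right (by norm_num) (by omega)

/-- The digit space. -/
abbrev Ω := Π n : ℕ, Fin (βseq d b B n)

instance (n : ℕ) : Nonempty (Fin (βseq d b B n)) := ⟨⟨0, βseq_pos d b B n⟩⟩

/-- the summand for coordinate `i` of level `n`. -/
noncomputable def term (a : Ω d b B) (n : ℕ) (i : Fin d) : ℝ :=
  if Nat.testBit ((a n) : ℕ) (i : ℕ) then ((2:ℝ)^(n+1))⁻¹ else 0

lemma term_nonneg (a : Ω d b B) (n : ℕ) (i : Fin d) : 0 ≤ term d b B a n i := by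
  rw [term]; split <;> positivity

lemma term_le (a : Ω d b B) (n : ℕ) (i : Fin d) : term d b B a n i ≤ ((2:ℝ)^(n+1))⁻¹ := by
  rw [term]; split
  · exact le_rfl
  · positivity

lemma term_abs_le (a a' : Ω d b B) (n : ℕ) (i : Fin d) :
    |term d b B a n i - term d b B a' n i| ≤ ((2:ℝ)^(n+1))⁻¹ := by
  rw [abs_sub_le_iff]
  constructor <;>
    [linarith [term_le d b B a n i, term_nonneg d b B a' n i];
     linarith [term_le d b B a' n i, term_nonneg d b B a n i]]

lemma summable_geom_aux : Summable (fun n : ℕ => ((2:ℝ)^(n+1))⁻¹) := by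
  have : (fun n : ℕ => ((2:ℝ)^(n+1))⁻¹) = (fun n : ℕ => (1/2:ℝ)^(n+1)) := by
    funext n; rw [one_div, inv_pow]
  rw [this]
  exact (summable_geometric_of_lt_one (by norm_num) (by norm_num)).comp_injective (add_left_injective 1)

lemma tsum_geom_aux : ∑' n : ℕ, ((2:ℝ)^(n+1))⁻¹ = 1 := by
  have h : ∀ n : ℕ, ((2:ℝ)^(n+1))⁻¹ = (1/2:ℝ) * (1/2)^n := by
    intro n; rw [pow_succ]; field_simp; rw [← mul_pow]; norm_num
  simp_rw [h]
  rw [tsum_mul_left, tsum_geometric_of_lt_one (by norm_num) (by norm_num)]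
  norm_num

lemma summable_term (a : Ω d b B) (i : Fin d) : Summable (fun n => term d b B a n i) := by
  apply Summable.of_nonneg_of_le (term_nonneg d b B a · i) (term_le d b B a · i)
    (summable_geom_aux)

lemma geom_finset (N : ℕ) :
    ∑ n ∈ Finset.range N, ((2:ℝ)^(n+1))⁻¹ = 1 - ((2:ℝ)^N)⁻¹ := by
  induction N with
  | zero => simp
  | succ N ih =>
    rw [Finset.sum_range_succ, ih, pow_succ]
    have : (2:ℝ)^N ≠ 0 := by positivity
    field_simp
    ring

/-- The embedding into Euclidean space. -/
noncomputable def Φ (a : Ω d b B) : EuclideanSpace ℝ (Fin d) :=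
  (EuclideanSpace.equiv (Fin d) ℝ).symm (fun i => ∑' n, term d b B a n i)

lemma Φ_apply (a : Ω d b B) (i : Fin d) : Φ d b B a i = ∑' n, term d b B a n i := rfl

/-- The condensation set. -/
def CSet : Set (EuclideanSpace ℝ (Fin d)) := Set.range (Φ d b B)

lemma CSet_nonempty : (CSet d b B).Nonempty := Set.range_nonempty _

lemma CSet_subset_cube :
    CSet d b B ⊆ {x : EuclideanSpace ℝ (Fin d) | ∀ i, x i ∈ Set.Icc (0 : ℝ) 1} := by
  rintro x ⟨a, rfl⟩ i
  rw [Set.mem_Icc]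
  constructor
  · rw [Φ_apply]
    exact tsum_nonneg (term_nonneg d b B a · i)
  · rw [Φ_apply, ← tsum_geom_aux]
    exact Summable.tsum_le_tsum (term_le d b B a · i) (summable_term d b B a i) (summable_geom_aux)

lemma CSet_isCompact : IsCompact (CSet d b B) := by
  rw [CSet, ← Set.image_univ]
  apply IsCompact.image isCompact_univ
  apply Continuous.comp (EuclideanSpace.equiv (Fin d) ℝ).symm.continuous
  apply continuous_pi
  intro i
  apply continuous_tsum (u := fun n => ((2:ℝ)^(n+1))⁻¹)
  · intro n
    have he : (fun a : Ω d b B => term d b B a n i) =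
        (fun v : Fin (βseq d b B n) => if Nat.testBit (v : ℕ) (i:ℕ) then ((2:ℝ)^(n+1))⁻¹ else 0)
          ∘ (fun a : Ω d b B => a n) := rfl
    rw [he]
    exact Continuous.comp continuous_of_discreteTopology (continuous_apply n)
  · exact summable_geom_aux
  · intro n x
    rw [Real.norm_eq_abs, abs_of_nonneg (term_nonneg d b B x n i)]
    exact term_le d b B x n i

/-- prefix type -/
abbrev Pre (N : ℕ) := Π j : Fin N, Fin (βseq d b B j)

lemma sum_delta (N : ℕ) :
    ∑ j ∈ Finset.range N, (gseq d b B (j+1) - gseq d b B j) = gseq d b B N := by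
  induction N with
  | zero => simp [gseq_zero]
  | succ N ih =>
    rw [Finset.sum_range_succ, ih]
    have := gseq_mono d b B (Nat.le_succ N)
    simp only [Nat.succ_eq_add_one] at *
    omega

lemma card_Pre (N : ℕ) : Fintype.card (Pre d b B N) = 2 ^ gseq d b B N := by
  rw [Fintype.card_pi]
  simp only [Fintype.card_fin]
  rw [Fin.prod_univ_eq_prod_range (fun j => βseq d b B j) N]
  simp only [βseq]
  rw [Finset.prod_pow_eq_pow_sum, sum_delta]

/-- extension of a prefix by zeros -/
noncomputable def extend {N : ℕ} (p : Pre d b B N) : Ω d b B :=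
  fun n => if h : n < N then p ⟨n, h⟩ else ⟨0, βseq_pos d b B n⟩

lemma tsum_tail (N : ℕ) :
    ∑' n : ℕ, (if n < N then 0 else ((2:ℝ)^(n+1))⁻¹) = ((2:ℝ)^N)⁻¹ := by
  have hsum1 := summable_geom_aux
  have hsum2 : Summable (fun n : ℕ => if n < N then ((2:ℝ)^(n+1))⁻¹ else 0) := by
    apply Summable.of_nonneg_of_le _ _ hsum1
    · intro n; split <;> positivity
    · intro n; split
      · exact le_rfl
      · positivity
  have heq : (fun n : ℕ => (if n < N then 0 else ((2:ℝ)^(n+1))⁻¹)) =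
      fun n : ℕ => ((2:ℝ)^(n+1))⁻¹ - (if n < N then ((2:ℝ)^(n+1))⁻¹ else 0) := by
    funext n; split <;> simp
  rw [heq, Summable.tsum_sub hsum1 hsum2, tsum_geom_aux]
  have h2 : ∑' n : ℕ, (if n < N then ((2:ℝ)^(n+1))⁻¹ else 0) =
      ∑ n ∈ Finset.range N, (if n < N then ((2:ℝ)^(n+1))⁻¹ else 0) := by
    apply tsum_eq_sum
    intro n hn
    rw [Finset.mem_range] at hn
    rw [if_neg hn]
  rw [h2]
  have h3 : ∑ n ∈ Finset.range N, (if n < N then ((2:ℝ)^(n+1))⁻¹ else 0) =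
      ∑ n ∈ Finset.range N, ((2:ℝ)^(n+1))⁻¹ := by
    apply Finset.sum_congr rfl
    intro n hn
    rw [Finset.mem_range] at hn
    rw [if_pos hn]
  rw [h3, geom_finset]
  ring

lemma coord_diff_le {N : ℕ} (a a' : Ω d b B) (h : ∀ j, j < N → a j = a' j) (i : Fin d) :
    |Φ d b B a i - Φ d b B a' i| ≤ ((2:ℝ)^N)⁻¹ := by
  have hD : ∀ n, |term d b B a n i - term d b B a' n i| ≤
      (if n < N then 0 else ((2:ℝ)^(n+1))⁻¹) := by
    intro n
    split
    · rename_i hn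
      have ht : term d b B a n i = term d b B a' n i := by
        rw [term, term, h n hn]
      rw [ht, sub_self, abs_zero]
    · exact term_abs_le d b B a a' n i
  have hsumb : Summable (fun n : ℕ => if n < N then 0 else ((2:ℝ)^(n+1))⁻¹) := by
    apply Summable.of_nonneg_of_le _ _ summable_geom_aux
    · intro n; split <;> positivity
    · intro n; split
      · positivity
      · exact le_rfl
  have hsubsum : Summable (fun n => term d b B a n i - term d b B a' n i) :=
    (summable_term d b B a i).sub (summable_term d b B a' i)
  rw [Φ_apply, Φ_apply, ← Summable.tsum_sub (summable_term d b B a i) (summable_term d b B a' i)]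
  have habs : Summable (fun n => |term d b B a n i - term d b B a' n i|) :=
    Summable.of_nonneg_of_le (fun n => abs_nonneg _) hD hsumb
  calc |∑' n, (term d b B a n i - term d b B a' n i)|
      ≤ ∑' n, |term d b B a n i - term d b B a' n i| := by
        have := norm_tsum_le_tsum_norm (f := fun n => term d b B a n i - term d b B a' n i)
          (by simpa [Real.norm_eq_abs] using habs)
        simpa [Real.norm_eq_abs] using this
    _ ≤ ∑' n : ℕ, (if n < N then 0 else ((2:ℝ)^(n+1))⁻¹) := Summable.tsum_le_tsum hD habs hsumb
    _ = ((2:ℝ)^N)⁻¹ := tsum_tail N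

lemma abs_coord_le_dist (x y : EuclideanSpace ℝ (Fin d)) (i : Fin d) :
    |x i - y i| ≤ dist x y := by
  rw [EuclideanSpace.dist_eq]
  have h1 : |x i - y i| = Real.sqrt (dist (x i) (y i) ^ 2) := by
    rw [Real.sqrt_sq_eq_abs, Real.dist_eq, abs_abs]
  rw [h1]
  apply Real.sqrt_le_sqrt
  apply Finset.single_le_sum (f := fun j => dist (x j) (y j) ^ 2) (fun j _ => by positivity)
    (Finset.mem_univ i)

lemma dist_le_of_prefix_eq {N : ℕ} (a a' : Ω d b B) (h : ∀ j, j < N → a j = a' j) :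
    dist (Φ d b B a) (Φ d b B a') ≤ Real.sqrt d * ((2:ℝ)^N)⁻¹ := by
  rw [EuclideanSpace.dist_eq]
  have hb : ∀ j : Fin d, dist (Φ d b B a j) (Φ d b B a' j) ^ 2 ≤ (((2:ℝ)^N)⁻¹)^2 := by
    intro j
    have := coord_diff_le d b B a a' h j
    rw [Real.dist_eq]
    nlinarith [abs_nonneg (Φ d b B a j - Φ d b B a' j)]
  calc Real.sqrt (∑ j : Fin d, dist (Φ d b B a j) (Φ d b B a' j) ^ 2)
      ≤ Real.sqrt (∑ _j : Fin d, (((2:ℝ)^N)⁻¹)^2) :=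
        Real.sqrt_le_sqrt (Finset.sum_le_sum (fun j _ => hb j))
    _ = Real.sqrt (d * (((2:ℝ)^N)⁻¹)^2) := by rw [Finset.sum_const, Finset.card_univ,
        Fintype.card_fin, nsmul_eq_mul]
    _ = Real.sqrt d * ((2:ℝ)^N)⁻¹ := by
        rw [Real.sqrt_mul (by positivity), Real.sqrt_sq (by positivity)]

lemma exists_bit_diff {v w m : ℕ} (hv : v < 2^m) (hw : w < 2^m) (hne : v ≠ w) :
    ∃ i, i < m ∧ Nat.testBit v i ≠ Nat.testBit w i := by
  by_contra hcon
  push_neg at hcon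
  apply hne
  apply Nat.eq_of_testBit_eq
  intro i
  rcases Nat.lt_or_ge i m with him | him
  · exact hcon i him
  · have h2m : 2^m ≤ 2^i := Nat.pow_le_pow_right (by norm_num) him
    rw [Nat.testBit_lt_two_pow (lt_of_lt_of_le hv h2m),
      Nat.testBit_lt_two_pow (lt_of_lt_of_le hw h2m)]

lemma sep_of_prefix_ne {N : ℕ} (p q : Pre d b B N) (hne : p ≠ q) :
    ((2:ℝ)^N)⁻¹ ≤ dist (Φ d b B (extend d b B p)) (Φ d b B (extend d b B q)) := by
  set a := extend d b B p with ha
  set a' := extend d b B q with ha'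
  have hex : ∃ j, j < N ∧ a j ≠ a' j := by
    rw [Function.ne_iff] at hne
    obtain ⟨x, hx⟩ := hne
    refine ⟨x.val, x.isLt, ?_⟩
    rw [ha, ha', extend, extend]
    simp only [x.isLt, dif_pos]
    simpa using hx
  classical
  set j₀ := Nat.find hex with hj₀
  obtain ⟨hj₀N, hj₀ne⟩ := Nat.find_spec hex
  have hmin : ∀ m, m < j₀ → a m = a' m := by
    intro m hm
    have := Nat.find_min hex hm
    by_contra hc
    rcases Nat.lt_or_ge m N with h1 | h1
    · exact this ⟨h1, hc⟩
    · apply hc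
      rw [ha, ha', extend, extend]
      simp [not_lt.mpr h1]
  -- digits at j₀ differ in some bit i < d
  have hvlt : ((a j₀ : ℕ)) < 2^d := lt_of_lt_of_le (a j₀).isLt (βseq_le d b B j₀)
  have hwlt : ((a' j₀ : ℕ)) < 2^d := lt_of_lt_of_le (a' j₀).isLt (βseq_le d b B j₀)
  obtain ⟨i₀, hi₀d, hbit⟩ := exists_bit_diff hvlt hwlt (fun hc => hj₀ne (Fin.ext hc))
  set i : Fin d := ⟨i₀, hi₀d⟩
  -- the difference function
  set D : ℕ → ℝ := fun n => term d b B a n i - term d b B a' n i with hD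
  have hD0 : ∀ n, n < j₀ → D n = 0 := by
    intro n hn
    rw [hD]
    simp only
    rw [term, term, hmin n hn, sub_self]
  have hDN : ∀ n, N ≤ n → D n = 0 := by
    intro n hn
    have hza : a n = ⟨0, βseq_pos d b B n⟩ := by rw [ha, extend]; simp [not_lt.mpr hn]
    have hza' : a' n = ⟨0, βseq_pos d b B n⟩ := by rw [ha', extend]; simp [not_lt.mpr hn]
    rw [hD]
    simp only
    rw [term, term, hza, hza']
    simp [Nat.zero_testBit]
  have hDj : |D j₀| = ((2:ℝ)^(j₀+1))⁻¹ := by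
    rw [hD]
    simp only
    rw [term, term]
    rcases Bool.eq_false_or_eq_true (Nat.testBit ((a j₀ : ℕ)) (i:ℕ)) with hb1 | hb1 <;>
      rcases Bool.eq_false_or_eq_true (Nat.testBit ((a' j₀ : ℕ)) (i:ℕ)) with hb2 | hb2
    · exact absurd (hb1.trans hb2.symm) hbit
    · simp only [hb1, hb2]
      norm_num
    · simp only [hb1, hb2]
      norm_num
    · exact absurd (hb1.trans hb2.symm) hbit
  -- tsum is a finite sum
  have htf : Φ d b B a i - Φ d b B a' i = ∑ n ∈ Finset.range N, D n := by
    rw [Φ_apply, Φ_apply, ← Summable.tsum_sub (summable_term d b B a i) (summable_term d b B a' i)]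
    apply tsum_eq_sum
    intro n hn
    rw [Finset.mem_range] at hn
    exact hDN n (le_of_not_gt hn)
  have hsplit : ∑ n ∈ Finset.range N, D n =
      (∑ n ∈ Finset.range (j₀+1), D n) + ∑ n ∈ Finset.Ico (j₀+1) N, D n := by
    simp only [Finset.range_eq_Ico]
    exact (Finset.sum_Ico_consecutive _ (Nat.zero_le _) (by omega)).symm
  have hhead : ∑ n ∈ Finset.range (j₀+1), D n = D j₀ := by
    rw [Finset.sum_range_succ]
    rw [Finset.sum_eq_zero (fun n hn => hD0 n (Finset.mem_range.mp hn))]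
    ring
  have htail : |∑ n ∈ Finset.Ico (j₀+1) N, D n| ≤ ((2:ℝ)^(j₀+1))⁻¹ - ((2:ℝ)^N)⁻¹ := by
    calc |∑ n ∈ Finset.Ico (j₀+1) N, D n| ≤ ∑ n ∈ Finset.Ico (j₀+1) N, |D n| :=
        Finset.abs_sum_le_sum_abs _ _
      _ ≤ ∑ n ∈ Finset.Ico (j₀+1) N, ((2:ℝ)^(n+1))⁻¹ :=
        Finset.sum_le_sum (fun n _ => term_abs_le d b B a a' n i)
      _ = (∑ n ∈ Finset.range N, ((2:ℝ)^(n+1))⁻¹) -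
          ∑ n ∈ Finset.range (j₀+1), ((2:ℝ)^(n+1))⁻¹ := by
        simp only [Finset.range_eq_Ico]
        rw [← Finset.sum_Ico_consecutive (fun n => ((2:ℝ)^(n+1))⁻¹)
          (Nat.zero_le (j₀+1)) (by omega : j₀+1 ≤ N)]
        ring
      _ = ((2:ℝ)^(j₀+1))⁻¹ - ((2:ℝ)^N)⁻¹ := by rw [geom_finset, geom_finset]; ring
  have hcoord : ((2:ℝ)^N)⁻¹ ≤ |Φ d b B a i - Φ d b B a' i| := by
    rw [htf, hsplit, hhead]
    calc ((2:ℝ)^N)⁻¹ = ((2:ℝ)^(j₀+1))⁻¹ - (((2:ℝ)^(j₀+1))⁻¹ - ((2:ℝ)^N)⁻¹) := by ring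
      _ ≤ |D j₀| - |∑ n ∈ Finset.Ico (j₀+1) N, D n| := by
          rw [hDj]; linarith
      _ ≤ |D j₀ + ∑ n ∈ Finset.Ico (j₀+1) N, D n| := by
          have := abs_add_le (D j₀ + ∑ n ∈ Finset.Ico (j₀+1) N, D n)
            (-(∑ n ∈ Finset.Ico (j₀+1) N, D n))
          simp only [add_neg_cancel_right, abs_neg] at this
          linarith
  exact le_trans hcoord (abs_coord_le_dist d _ _ i)

/-- the covering set -/
def coverSet (F : Set (EuclideanSpace ℝ (Fin d))) (δ : ℝ) : Set ℕ :=
  {n : ℕ | ∃ U : Fin n → Set (EuclideanSpace ℝ (Fin d)),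
    (∀ i, EMetric.diam (U i) ≤ ENNReal.ofReal δ) ∧ F ⊆ ⋃ i, U i}

lemma mem_coverSet (N : ℕ) (δ : ℝ) (hδ : Real.sqrt d * ((2:ℝ)^N)⁻¹ ≤ δ) :
    2 ^ gseq d b B N ∈ coverSet d (CSet d b B) δ := by
  classical
  have hδ0 : 0 ≤ δ := le_trans (by positivity) hδ
  set V : Pre d b B N → Set (EuclideanSpace ℝ (Fin d)) :=
    fun p => Φ d b B '' {a : Ω d b B | ∀ j : Fin N, a j.val = p j} with hV
  have e : Pre d b B N ≃ Fin (2 ^ gseq d b B N) :=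
    Fintype.equivFinOfCardEq (card_Pre d b B N)
  refine ⟨fun i => V (e.symm i), ?_, ?_⟩
  · intro i
    apply EMetric.diam_le
    rintro x ⟨a, hx, rfl⟩ y ⟨a', hy, rfl⟩
    rw [edist_dist]
    apply ENNReal.ofReal_le_ofReal
    refine le_trans (dist_le_of_prefix_eq d b B a a' ?_) hδ
    intro j hj
    rw [hx ⟨j, hj⟩, hy ⟨j, hj⟩]
  · rintro x ⟨a, rfl⟩
    apply Set.mem_iUnion.mpr
    refine ⟨e (fun j => a j.val), ?_⟩
    rw [Equiv.symm_apply_apply]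
    exact ⟨a, fun j => rfl, rfl⟩

lemma coverN_eq (F : Set (EuclideanSpace ℝ (Fin d))) (δ : ℝ) :
    coverN F δ = sInf (coverSet d F δ) := rfl

lemma coverN_le_pow (N : ℕ) (δ : ℝ) (hδ : Real.sqrt d * ((2:ℝ)^N)⁻¹ ≤ δ) :
    coverN (CSet d b B) δ ≤ 2 ^ gseq d b B N :=
  Nat.sInf_le (mem_coverSet d b B N δ hδ)

lemma coverSet_nonempty (δ : ℝ) (h0 : 0 < δ) :
    (coverSet d (CSet d b B) δ).Nonempty := by
  obtain ⟨M, hM⟩ := pow_unbounded_of_one_lt (Real.sqrt d / δ) (by norm_num : (1:ℝ) < 2)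
  refine ⟨2 ^ gseq d b B M, mem_coverSet d b B M δ ?_⟩
  rw [div_lt_iff₀ h0] at hM
  have h2M : (0:ℝ) < 2^M := by positivity
  rw [mul_inv_le_iff₀ h2M]
  nlinarith

lemma one_le_coverN (δ : ℝ) (h0 : 0 < δ) : 1 ≤ coverN (CSet d b B) δ := by
  have hmem := Nat.sInf_mem (coverSet_nonempty d b B δ h0)
  rw [← coverN_eq] at hmem
  rcases Nat.eq_zero_or_pos (coverN (CSet d b B) δ) with h | h
  · exfalso
    rw [h] at hmem
    obtain ⟨U, _, hcov⟩ := hmem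
    obtain ⟨x, hx⟩ := CSet_nonempty d b B
    obtain ⟨i, -⟩ := Set.mem_iUnion.mp (hcov hx)
    exact absurd i.isLt (by omega)
  · exact h

lemma pow_le_coverN (N : ℕ) (δ : ℝ) (h0 : 0 < δ) (hδ : δ < ((2:ℝ)^N)⁻¹) :
    2 ^ gseq d b B N ≤ coverN (CSet d b B) δ := by
  classical
  have hmem := Nat.sInf_mem (coverSet_nonempty d b B δ h0)
  rw [← coverN_eq] at hmem
  obtain ⟨U, hdiam, hcov⟩ := hmem
  by_contra hcon
  push_neg at hcon
  -- map each prefix to an index of the cover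
  have hchoice : ∀ p : Pre d b B N, ∃ i, Φ d b B (extend d b B p) ∈ U i := by
    intro p
    exact Set.mem_iUnion.mp (hcov ⟨extend d b B p, rfl⟩)
  choose F hF using hchoice
  have hcard : Fintype.card (Fin (coverN (CSet d b B) δ)) < Fintype.card (Pre d b B N) := by
    rw [Fintype.card_fin, card_Pre]
    exact hcon
  obtain ⟨p, q, hpq, hFpq⟩ := Fintype.exists_ne_map_eq_of_card_lt F hcard
  have h1 := hF p
  have h2 := hF q
  rw [hFpq] at h1
  have hdist : dist (Φ d b B (extend d b B p)) (Φ d b B (extend d b B q)) ≤ δ := by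
    have hedist := EMetric.edist_le_diam_of_mem h1 h2
    have := le_trans hedist (hdiam (F q))
    exact (edist_le_ofReal h0.le).mp this
  have hsep := sep_of_prefix_ne d b B p q hpq
  linarith

end geometry

section analysis

variable (d : ℕ) (b B : ℝ)

lemma sqrt_d_le : Real.sqrt d ≤ (2:ℝ)^d := by
  rcases Nat.eq_zero_or_pos d with h | h
  · subst h; simp
  · have h1 : Real.sqrt d ≤ d := by
      have h3 := Real.sqrt_le_sqrt (show (d:ℝ) ≤ (d:ℝ)^2 by
        nlinarith [(Nat.one_le_cast (α := ℝ)).mpr h])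
      rwa [Real.sqrt_sq (by positivity)] at h3
    have h2 : (d:ℝ) ≤ 2^d := by
      exact_mod_cast (Nat.lt_two_pow_self (n := d)).le
    linarith

lemma exists_dyadic (δ : ℝ) (h0 : 0 < δ) (h1 : δ < 1) :
    ∃ n : ℕ, ((2:ℝ)^(n+1))⁻¹ ≤ δ ∧ δ < ((2:ℝ)^n)⁻¹ := by
  have hex : ∃ n : ℕ, ((2:ℝ)^n)⁻¹ ≤ δ := by
    obtain ⟨M, hM⟩ := pow_unbounded_of_one_lt δ⁻¹ (by norm_num : (1:ℝ) < 2)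
    exact ⟨M, by rw [inv_le_comm₀ (by positivity) h0]; exact hM.le⟩
  classical
  set n₀ := Nat.find hex with hn₀
  have hspec : ((2:ℝ)^n₀)⁻¹ ≤ δ := Nat.find_spec hex
  have hpos : n₀ ≠ 0 := by
    intro hc
    rw [hc] at hspec
    simp at hspec
    linarith
  obtain ⟨n, hn⟩ : ∃ n, n₀ = n + 1 := ⟨n₀ - 1, by omega⟩
  rw [hn] at hspec
  refine ⟨n, hspec, ?_⟩
  have := Nat.find_min hex (show n < n₀ by omega)
  exact lt_of_not_ge this

/-- The function whose liminf/limsup are the box dimensions. -/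
noncomputable def FF (δ : ℝ) : ℝ := Real.log (coverN (CSet d b B) δ) / (-Real.log δ)

lemma F_dyadic (n : ℕ) (hn : 1 ≤ n) (δ : ℝ)
    (h1 : ((2:ℝ)^(n+1))⁻¹ ≤ δ) (h2 : δ < ((2:ℝ)^n)⁻¹) :
    (gseq d b B n : ℝ)/(n+1) ≤ FF d b B δ ∧
      FF d b B δ ≤ (gseq d b B (n+1+d) : ℝ)/n := by
  have hδ0 : 0 < δ := lt_of_lt_of_le (by positivity) h1
  have hδ1 : δ < 1 := by
    apply lt_of_lt_of_le h2
    rw [inv_le_one_iff₀]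
    right
    exact one_le_pow₀ (by norm_num)
  have hlogδ : Real.log δ < 0 := Real.log_neg hδ0 hδ1
  have hl2 : (0:ℝ) < Real.log 2 := Real.log_pos (by norm_num)
  -- bounds on -log δ
  have hlogle : -Real.log δ ≤ (n+1) * Real.log 2 := by
    have := Real.log_le_log (by positivity) h1
    rw [Real.log_inv, Real.log_pow] at this
    push_cast at this
    linarith
  have hlogge : (n:ℝ) * Real.log 2 ≤ -Real.log δ := by
    have := Real.log_le_log hδ0 h2.le
    rw [Real.log_inv, Real.log_pow] at this
    push_cast at this
    linarith
  have hC0 : (0:ℝ) < -Real.log δ := by linarith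
  -- bounds on log coverN
  have hcov1 : (1:ℝ) ≤ (coverN (CSet d b B) δ : ℝ) := by
    exact_mod_cast one_le_coverN d b B δ hδ0
  have hcovlow : ((2:ℝ)^(gseq d b B n) : ℝ) ≤ (coverN (CSet d b B) δ : ℝ) := by
    have := pow_le_coverN d b B n δ hδ0 h2
    exact_mod_cast this
  have hcovhigh : (coverN (CSet d b B) δ : ℝ) ≤ (2:ℝ)^(gseq d b B (n+1+d)) := by
    have hup : Real.sqrt d * ((2:ℝ)^(n+1+d))⁻¹ ≤ δ := by
      have hsd := sqrt_d_le d
      have h2d : (0:ℝ) < (2:ℝ)^(n+1+d) := by positivity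
      have : (2:ℝ)^d * ((2:ℝ)^(n+1+d))⁻¹ = ((2:ℝ)^(n+1))⁻¹ := by
        rw [pow_add]
        field_simp
      calc Real.sqrt d * ((2:ℝ)^(n+1+d))⁻¹ ≤ (2:ℝ)^d * ((2:ℝ)^(n+1+d))⁻¹ := by
            apply mul_le_mul_of_nonneg_right hsd (by positivity)
        _ = ((2:ℝ)^(n+1))⁻¹ := this
        _ ≤ δ := h1
    have := coverN_le_pow d b B (n+1+d) δ hup
    exact_mod_cast this
  have hA1 : (gseq d b B n : ℝ) * Real.log 2 ≤ Real.log (coverN (CSet d b B) δ) := by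
    have := Real.log_le_log (by positivity) hcovlow
    rw [Real.log_pow] at this
    linarith
  have hA2 : Real.log (coverN (CSet d b B) δ) ≤ (gseq d b B (n+1+d) : ℝ) * Real.log 2 := by
    have := Real.log_le_log (by linarith) hcovhigh
    rw [Real.log_pow] at this
    linarith
  have hA0 : 0 ≤ Real.log (coverN (CSet d b B) δ) := Real.log_nonneg hcov1
  have hg0 : (0:ℝ) ≤ (gseq d b B n : ℝ) := Nat.cast_nonneg _
  have hg0' : (0:ℝ) ≤ (gseq d b B (n+1+d) : ℝ) := Nat.cast_nonneg _
  have hn1 : (0:ℝ) < (n:ℝ) := by exact_mod_cast hn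
  constructor
  · rw [FF, div_le_div_iff₀ (by positivity) hC0]
    nlinarith
  · rw [FF, div_le_div_iff₀ hC0 hn1]
    nlinarith


lemma mem_L (c : ℝ) (hc : 0 < c) : Set.Ioo (0:ℝ) c ∈ 𝓝[>] (0:ℝ) :=
  Ioo_mem_nhdsGT_of_mem (by simp [hc])

lemma tendsto_inv_pow (v : ℕ → ℕ) (hv : ∀ᶠ k in atTop, k ≤ v k) :
    Tendsto (fun k => ((2:ℝ)^(v k))⁻¹) atTop (𝓝[>] (0:ℝ)) := by
  rw [tendsto_nhdsWithin_iff]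
  constructor
  · apply squeeze_zero' (Filter.Eventually.of_forall (fun k => by positivity))
      (g := fun k => (1/2:ℝ)^k)
    · filter_upwards [hv] with k hk
      rw [one_div, inv_pow]
      apply inv_anti₀ (by positivity)
      exact pow_le_pow_right₀ (by norm_num) hk
    · exact tendsto_pow_atTop_nhds_zero_of_lt_one (by norm_num) (by norm_num)
  · exact Filter.Eventually.of_forall (fun k => Set.mem_Ioi.mpr (by positivity))

end analysis

section dims

variable {d : ℕ} {b B : ℝ} (hb : 0 < b) (hbB : b < B) (hBd : B ≤ (d:ℝ))

include hb hbB hBd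

lemma FF_nonneg_ev : ∀ᶠ δ in 𝓝[>] (0:ℝ), 0 ≤ FF d b B δ := by
  filter_upwards [mem_L 1 one_pos] with δ hδ
  obtain ⟨h0, h1⟩ := hδ
  rw [FF]
  apply div_nonneg
  · apply Real.log_nonneg
    exact_mod_cast one_le_coverN d b B δ h0
  · have := Real.log_neg h0 h1
    linarith

lemma FF_upper_ev : ∀ᶠ δ in 𝓝[>] (0:ℝ), FF d b B δ ≤ (2+d)*B := by
  filter_upwards [mem_L (1/2) (by norm_num)] with δ hδ
  obtain ⟨h0, h1⟩ := hδ
  obtain ⟨n, hn1, hn2⟩ := exists_dyadic δ h0 (by linarith)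
  have hn : 1 ≤ n := by
    by_contra hc
    push_neg at hc
    interval_cases n
    norm_num at hn1
    linarith
  have hFd := (F_dyadic d b B n hn δ hn1 hn2).2
  have hgle : (gseq d b B (n+1+d) : ℝ) ≤ (n+1+d) * B := by
    have := gseq_le hb hbB (d := d) (n+1+d)
    push_cast at this ⊢
    linarith
  have hn0 : (0:ℝ) < n := by exact_mod_cast hn
  have hB0 : (0:ℝ) < B := by linarith
  have hd1 : (1:ℝ) ≤ (d:ℝ) := by
    exact_mod_cast Nat.one_le_cast.mpr (hd_ge hb hbB hBd)
  have h1n : (1:ℝ) ≤ (n:ℝ) := by exact_mod_cast hn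
  calc FF d b B δ ≤ (gseq d b B (n+1+d) : ℝ)/n := hFd
    _ ≤ (2+d)*B := by
        rw [div_le_iff₀ hn0]
        push_cast at hgle ⊢
        have hdn : (d:ℝ)*1 ≤ (d:ℝ)*n := mul_le_mul_of_nonneg_left h1n (by linarith)
        nlinarith [mul_le_mul_of_nonneg_right
          (show (n:ℝ)+1+(d:ℝ) ≤ (2+(d:ℝ))*n by nlinarith) hB0.le]

lemma FF_bddle : Filter.IsBoundedUnder (· ≤ ·) (𝓝[>] (0:ℝ)) (FF d b B) :=
  ⟨(2+d)*B, eventually_map.mpr (FF_upper_ev hb hbB hBd)⟩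

lemma FF_bddge : Filter.IsBoundedUnder (· ≥ ·) (𝓝[>] (0:ℝ)) (FF d b B) :=
  ⟨0, eventually_map.mpr (FF_nonneg_ev hb hbB hBd)⟩

lemma ubDim_le : Filter.limsup (FF d b B) (𝓝[>] (0:ℝ)) ≤ B := by
  apply le_of_forall_pos_le_add
  intro ε hε
  apply Filter.limsup_le_of_le ((FF_bddge hb hbB hBd).isCoboundedUnder_flip)
  have hB0 : (0:ℝ) < B := by linarith
  obtain ⟨N, hN⟩ := exists_nat_ge ((1+d)*B/ε)
  filter_upwards [mem_L (((2:ℝ)^(N+2))⁻¹) (by positivity)] with δ hδ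
  obtain ⟨h0, hsm⟩ := hδ
  have h1 : δ < 1 := lt_trans hsm (by
    rw [inv_lt_one_iff₀]; right; exact one_lt_pow₀ (by norm_num) (by omega))
  obtain ⟨n, hn1, hn2⟩ := exists_dyadic δ h0 h1
  have hnN : N + 1 ≤ n := by
    by_contra hc
    push_neg at hc
    have : ((2:ℝ)^(N+2))⁻¹ ≤ ((2:ℝ)^(n+1))⁻¹ := by
      apply inv_anti₀ (by positivity)
      exact pow_le_pow_right₀ (by norm_num) (by omega)
    linarith
  have hn : 1 ≤ n := by omega
  have hFd := (F_dyadic d b B n hn δ hn1 hn2).2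
  have hgle : (gseq d b B (n+1+d) : ℝ) ≤ (n+1+d) * B := by
    have := gseq_le hb hbB (d := d) (n+1+d)
    push_cast at this ⊢
    linarith
  have hn0 : (0:ℝ) < n := by exact_mod_cast hn
  have hNn : ((1+d):ℝ)*B ≤ ε * n := by
    have hNr : ((1+d):ℝ)*B/ε ≤ N := hN
    have : ((1+d):ℝ)*B/ε ≤ n := by
      have : ((N:ℝ)) ≤ n := by exact_mod_cast (by omega : N ≤ n)
      linarith
    rw [div_le_iff₀ hε] at this
    linarith [mul_comm ε (n:ℝ)]
  calc FF d b B δ ≤ (gseq d b B (n+1+d) : ℝ)/n := hFd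
    _ ≤ B + ε := by
        rw [div_le_iff₀ hn0]
        push_cast at hgle ⊢
        nlinarith


lemma ubDim_ge : B ≤ Filter.limsup (FF d b B) (𝓝[>] (0:ℝ)) := by
  by_contra hcon
  push_neg at hcon
  obtain ⟨a, ha1, ha2⟩ := exists_between hcon
  have hfreq : ∃ᶠ δ in 𝓝[>] (0:ℝ), a ≤ FF d b B δ := by
    have htd : Tendsto (fun k => ((2:ℝ)^(mseq d b B (k+1)+1))⁻¹) atTop (𝓝[>] (0:ℝ)) := by
      apply tendsto_inv_pow
      filter_upwards with k
      have h1 := mseq_pos d b B (k+1)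
      have h2 : (k+2) ≤ mseq d b B (k+1) := by
        rw [mseq_succ]
        nlinarith [wseq_pos d b B k]
      omega
    apply htd.frequently
    apply Filter.Eventually.frequently
    -- eventually in k, a ≤ FF at the dyadic point mseq (k+1)
    have hB0 : (0:ℝ) < B := by linarith
    have hd1 : (1:ℝ) ≤ (d:ℝ) := by
      exact_mod_cast Nat.one_le_cast.mpr (hd_ge hb hbB hBd)
    obtain ⟨K, hK⟩ := exists_nat_ge ((3*d+B)/(B-a))
    filter_upwards [Filter.eventually_ge_atTop K] with k hk
    set m := mseq d b B (k+1) with hm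
    have hm1 : 1 ≤ m := mseq_pos d b B (k+1)
    have hFd := (F_dyadic d b B m hm1 (((2:ℝ)^(m+1))⁻¹) le_rfl
      (by apply inv_strictAnti₀ (by positivity); exact pow_lt_pow_right₀ (by norm_num) (by omega))).1
    have hgm := gseq_at_m hb hbB hBd (d := d) k
    rw [← hm] at hgm
    -- a ≤ (m B - (2d + d w))/(m+1) ≤ g m/(m+1) ≤ FF
    set w := wseq d b B k with hw
    have hw1 : (1:ℝ) ≤ (w:ℝ) := by exact_mod_cast wseq_pos d b B k
    have hmw : (m:ℝ) = (k+2) * w := by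
      rw [hm, mseq_succ, ← hw]; push_cast; ring
    have hk2 : ((3*d+B)/(B-a)) ≤ (k:ℝ) := le_trans hK (by exact_mod_cast hk)
    have hka : (3*(d:ℝ)+B) ≤ (k+2)*(B-a) := by
      rw [div_le_iff₀ (by linarith)] at hk2
      nlinarith
    have key : a ≤ ((m:ℝ)*B - (2*d + d*w))/(m+1) := by
      rw [le_div_iff₀ (by positivity)]
      rw [hmw]
      nlinarith [mul_le_mul_of_nonneg_left hw1 (show (0:ℝ) ≤ (k+2)*(B-a) by nlinarith)]
    calc a ≤ ((m:ℝ)*B - (2*d + d*w))/(m+1) := key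
      _ ≤ (gseq d b B m : ℝ)/(m+1) := by
          gcongr
      _ ≤ FF d b B (((2:ℝ)^(m+1))⁻¹) := hFd
  have := Filter.le_limsup_of_frequently_le hfreq (FF_bddle hb hbB hBd)
  linarith


omit hb hbB hBd in
lemma kOf_small : ∀ ε : ℝ, 0 < ε → ∀ᶠ n in atTop, (kOf d b B n : ℝ) ≤ ε * n := by
  intro ε hε
  have hsum : Summable (fun k:ℕ => (k:ℝ) * (1/2)^k) := by
    have := summable_pow_mul_geometric_of_norm_lt_one (R := ℝ) 1
      (r := (1/2:ℝ)) (by rw [Real.norm_eq_abs, abs_of_pos] <;> norm_num)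
    simpa using this
  have hz := hsum.tendsto_atTop_zero
  have hev : ∀ᶠ k:ℕ in atTop, (k:ℝ) * (1/2)^k < ε/2 :=
    hz.eventually_lt_const (by positivity)
  obtain ⟨K, hK⟩ := Filter.eventually_atTop.mp hev
  filter_upwards [Filter.eventually_gt_atTop (wseq d b B K)] with n hn
  set k := kOf d b B n with hkdef
  have hkK : K < k := by
    by_contra hc
    push_neg at hc
    have hs := kOf_spec d b B n
    rw [← hkdef] at hs
    have := (wseq_strictMono d b B).monotone hc
    omega
  obtain ⟨k', hk'⟩ : ∃ k', k = k' + 1 := ⟨k - 1, by omega⟩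
  have hwn : wseq d b B k' < n := kOf_min d b B (by omega)
  have h2w : (2:ℝ)^k' ≤ wseq d b B k' := by exact_mod_cast two_pow_le_wseq d b B k'
  have hkb := hK k (by omega)
  -- k * (1/2)^k < ε/2  ⇒  k < ε * 2^(k-1) = ε * 2^k' ≤ ε * w_{k'} < ε * n
  have h2k : (0:ℝ) < (2:ℝ)^k := by positivity
  have hklt : (k:ℝ) < ε/2 * 2^k := by
    have := mul_lt_mul_of_pos_right hkb h2k
    rw [mul_assoc, one_div, inv_pow, inv_mul_cancel₀ (ne_of_gt h2k)] at this
    simpa using this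
  have h2kk : (ε/2) * (2:ℝ)^k = ε * 2^k' := by
    rw [hk', pow_succ]
    ring
  have hwr : (wseq d b B k' : ℝ) < n := by exact_mod_cast hwn
  have hfin : (k:ℝ) < ε * n := by
    calc (k:ℝ) < ε/2 * 2^k := hklt
      _ = ε * 2^k' := h2kk
      _ ≤ ε * wseq d b B k' := by nlinarith
      _ ≤ ε * n := by nlinarith
  exact hfin.le

lemma lbDim_ge : b ≤ Filter.liminf (FF d b B) (𝓝[>] (0:ℝ)) := by
  apply le_of_forall_pos_le_add
  intro ε hε
  have h2 : b - ε ≤ Filter.liminf (FF d b B) (𝓝[>] (0:ℝ)) := by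
    apply Filter.le_liminf_of_le ((FF_bddle hb hbB hBd).isCoboundedUnder_flip)
    -- eventually in n: n*b - (kOf n + 2d) ≥ (b-ε)(n+1)
    have hev : ∀ᶠ n:ℕ in atTop, (b-ε) ≤ ((n:ℝ)*b - (kOf d b B n + 2*d))/(n+1) := by
      filter_upwards [kOf_small (d := d) (b := b) (B := B) (ε/2) (by positivity),
        Filter.eventually_ge_atTop (⌈(2*(2*d + b))/ε⌉₊ + 1)] with n h1 h2
      have hn0 : (1:ℝ) ≤ (n:ℝ) := by exact_mod_cast (by omega : 1 ≤ n)
      have hn2 : ((⌈(2*(2*d + b))/ε⌉₊:ℝ)) ≤ n := by exact_mod_cast (by omega : ⌈(2*(2*d+b))/ε⌉₊ ≤ n)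
      have hceil : (2*(2*(d:ℝ) + b))/ε ≤ n := le_trans (Nat.le_ceil _) hn2
      rw [div_le_iff₀ hε] at hceil
      rw [le_div_iff₀ (by positivity)]
      nlinarith
    obtain ⟨N, hN⟩ := Filter.eventually_atTop.mp hev
    filter_upwards [mem_L (((2:ℝ)^(N+2))⁻¹) (by positivity)] with δ hδ
    obtain ⟨h0, hsm⟩ := hδ
    have h1 : δ < 1 := lt_trans hsm (by
      rw [inv_lt_one_iff₀]; right; exact one_lt_pow₀ (by norm_num) (by omega))
    obtain ⟨n, hn1, hn2⟩ := exists_dyadic δ h0 h1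
    have hnN : N + 1 ≤ n := by
      by_contra hc
      push_neg at hc
      have : ((2:ℝ)^(N+2))⁻¹ ≤ ((2:ℝ)^(n+1))⁻¹ := by
        apply inv_anti₀ (by positivity)
        exact pow_le_pow_right₀ (by norm_num) (by omega)
      linarith
    have hFd := (F_dyadic d b B n (by omega) δ hn1 hn2).1
    have hglow := gseq_ge hb hbB hBd (d := d) n
    have hNn := hN n (by omega)
    calc b - ε ≤ ((n:ℝ)*b - (kOf d b B n + 2*d))/(n+1) := hNn
      _ ≤ (gseq d b B n : ℝ)/(n+1) := by gcongr
      _ ≤ FF d b B δ := hFd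
  linarith

lemma lbDim_le : Filter.liminf (FF d b B) (𝓝[>] (0:ℝ)) ≤ b := by
  apply le_of_forall_pos_le_add
  intro ε hε
  apply Filter.liminf_le_of_frequently_le ?_ (FF_bddge hb hbB hBd)
  have htd : Tendsto (fun k => ((2:ℝ)^((wseq d b B (k+1) - (d+1))+1))⁻¹) atTop (𝓝[>] (0:ℝ)) := by
    apply tendsto_inv_pow
    filter_upwards [Filter.eventually_ge_atTop d] with k hk
    have h2w : 2^(k+1) ≤ wseq d b B (k+1) := two_pow_le_wseq d b B (k+1)
    have hk2 : k + d + 1 ≤ 2^(k+1) := by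
      have h1 : k < 2^k := Nat.lt_two_pow_self
      have : 2^(k+1) = 2^k + 2^k := by ring
      omega
    omega
  apply htd.frequently
  apply Filter.Eventually.frequently
  obtain ⟨K, hK⟩ := exists_nat_ge ((b+ε)*(d+1))
  filter_upwards [Filter.eventually_ge_atTop K] with k hk
  set w := wseq d b B (k+1) with hw
  have hwd : d + 2 ≤ w := by
    have h1 : mseq d b B (k+1) < cseq d b B (k+1) := mseq_lt_cseq d b B (k+1)
    have h2 : 1 ≤ mseq d b B (k+1) := mseq_pos d b B (k+1)
    have h3 : w = (k+2) * (cseq d b B (k+1) + d + 1) := wseq_succ d b B k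
    nlinarith
  set W := w - (d+1) with hW
  have hW1 : 1 ≤ W := by omega
  have hWw : W + 1 + d = w := by omega
  have hFd := (F_dyadic d b B W hW1 (((2:ℝ)^(W+1))⁻¹) le_rfl
    (by apply inv_strictAnti₀ (by positivity); exact pow_lt_pow_right₀ (by norm_num) (by omega))).2
  rw [hWw] at hFd
  have hgood : (gseq d b B w : ℝ) ≤ w * b - (k+1) :=
    gseq_good hb hbB k w (le_of_lt (cseq_lt_wseq d b B k)) le_rfl
  have hWr : (W:ℝ) = (w:ℝ) - (d+1) := by
    rw [hW]
    push_cast [Nat.cast_sub (by omega : d+1 ≤ w)]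
    ring
  have hW0 : (0:ℝ) < (W:ℝ) := by exact_mod_cast hW1
  have hkK : ((b+ε)*(d+1)) ≤ (k:ℝ) := le_trans hK (by exact_mod_cast hk)
  calc FF d b B (((2:ℝ)^(W+1))⁻¹) ≤ (gseq d b B w : ℝ)/W := hFd
    _ ≤ b + ε := by
        rw [div_le_iff₀ hW0, hWr]
        have hw0 : (0:ℝ) ≤ (w:ℝ) := Nat.cast_nonneg _
        nlinarith


omit hb hbB hBd in
lemma cre_between (δ : ℝ) (h0 : 0 < δ) (h1 : δ < 1) (t : ℝ) :
    0 ≤ cre (CSet d b B) t δ ∧ cre (CSet d b B) t δ ≤ 1 := by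
  have hmem : (0:ℝ) ∈ {p : ℝ | 0 ≤ p ∧ p ≤ 1 ∧
      δ ^ (-(p * t)) ≤ (coverN (CSet d b B) (δ ^ p) : ℝ)} := by
    refine ⟨le_rfl, by norm_num, ?_⟩
    rw [zero_mul, neg_zero, Real.rpow_zero]
    exact_mod_cast one_le_coverN d b B 1 one_pos
  have hbdd : BddAbove {p : ℝ | 0 ≤ p ∧ p ≤ 1 ∧
      δ ^ (-(p * t)) ≤ (coverN (CSet d b B) (δ ^ p) : ℝ)} :=
    ⟨1, fun p hp => hp.2.1⟩
  constructor
  · exact le_csSup hbdd hmem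
  · exact Real.sSup_le (fun p hp => hp.2.1) one_pos.le

omit hb hbB hBd in
lemma cseq_le_W (k : ℕ) : (k+1) * cseq d b B (k+1) ≤ wseq d b B (k+1) - (d+1) := by
  have h3 : wseq d b B (k+1) = (k+2) * (cseq d b B (k+1) + d + 1) := wseq_succ d b B k
  have h4 : (k+1) * cseq d b B (k+1) + (d+1) ≤ wseq d b B (k+1) := by
    rw [h3]
    nlinarith [cseq d b B (k+1)]
  omega

lemma cre_small (t : ℝ) (ht : b ≤ t) (ε : ℝ) (hε : 0 < ε) (hε1 : ε ≤ 1) :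
    ∀ᶠ k in atTop, cre (CSet d b B) t (((2:ℝ)^(wseq d b B (k+1) - (d+1)))⁻¹) ≤ ε := by
  obtain ⟨K₁, hK₁⟩ := exists_nat_ge (1/ε)
  obtain ⟨K₂, hK₂⟩ := exists_nat_ge ((1+(d:ℝ))*b)
  filter_upwards [Filter.eventually_ge_atTop K₁, Filter.eventually_ge_atTop K₂] with k hk1 hk2
  set w := wseq d b B (k+1) with hw
  have hwd : d + 2 ≤ w := by
    have h1 : mseq d b B (k+1) < cseq d b B (k+1) := mseq_lt_cseq d b B (k+1)
    have h2 : 1 ≤ mseq d b B (k+1) := mseq_pos d b B (k+1)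
    have h3 : w = (k+2) * (cseq d b B (k+1) + d + 1) := wseq_succ d b B k
    nlinarith
  set W := w - (d+1) with hWdef
  have hW1 : 1 ≤ W := by omega
  have hWw : W + 1 + d = w := by omega
  set δ := ((2:ℝ)^W)⁻¹ with hδdef
  have hδ0 : 0 < δ := by positivity
  apply Real.sSup_le _ hε.le
  intro p hp
  obtain ⟨hp0, hp1, hpc⟩ := hp
  by_contra hpε
  push_neg at hpε
  -- set up
  have hW0 : (0:ℝ) < (W:ℝ) := by exact_mod_cast hW1
  set s := (W:ℝ) * p with hsdef
  have hs0 : 0 < s := by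
    rw [hsdef]
    exact mul_pos hW0 (lt_trans hε hpε)
  have hsW : s ≤ W := by nlinarith
  set n := ⌊s⌋₊ + 1 + d with hndef
  have hfloor_le : (⌊s⌋₊:ℝ) ≤ s := Nat.floor_le hs0.le
  have hlt_floor : s < (⌊s⌋₊:ℝ) + 1 := Nat.lt_floor_add_one s
  have hnw : n ≤ w := by
    have : ⌊s⌋₊ ≤ W := by
      have := Nat.floor_le_floor (R := ℝ) hsW
      rwa [Nat.floor_natCast] at this
    omega
  -- rpow computations
  have hδeq : δ = (2:ℝ) ^ (-(W:ℝ)) := by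
    rw [hδdef, Real.rpow_neg (by norm_num), Real.rpow_natCast]
  have hδp : δ ^ p = (2:ℝ) ^ (-s) := by
    rw [hδeq, ← Real.rpow_mul (by norm_num : (0:ℝ) ≤ 2)]
    congr 1
    rw [hsdef]
    ring
  have hδpt : δ ^ (-(p*t)) = (2:ℝ) ^ (s*t) := by
    rw [hδeq, ← Real.rpow_mul (by norm_num : (0:ℝ) ≤ 2)]
    congr 1
    rw [hsdef]
    ring
  -- covering bound
  have hδp0 : 0 < δ ^ p := by rw [hδp]; positivity
  have hup : Real.sqrt d * ((2:ℝ)^n)⁻¹ ≤ δ ^ p := by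
    have h2n : ((2:ℝ)^n) = (2:ℝ)^(⌊s⌋₊+1) * (2:ℝ)^d := by rw [hndef, pow_add]
    have hstep1 : Real.sqrt d * ((2:ℝ)^n)⁻¹ ≤ ((2:ℝ)^(⌊s⌋₊+1))⁻¹ := by
      rw [h2n]
      have := sqrt_d_le d
      rw [mul_inv]
      calc Real.sqrt d * (((2:ℝ)^(⌊s⌋₊+1))⁻¹ * ((2:ℝ)^d)⁻¹)
          = (Real.sqrt d * ((2:ℝ)^d)⁻¹) * ((2:ℝ)^(⌊s⌋₊+1))⁻¹ := by ring
        _ ≤ (((2:ℝ)^d) * ((2:ℝ)^d)⁻¹) * ((2:ℝ)^(⌊s⌋₊+1))⁻¹ := by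
            apply mul_le_mul_of_nonneg_right _ (by positivity)
            apply mul_le_mul_of_nonneg_right this (by positivity)
        _ = ((2:ℝ)^(⌊s⌋₊+1))⁻¹ := by
            rw [mul_inv_cancel₀ (by positivity)]
            ring
    have hstep2 : ((2:ℝ)^(⌊s⌋₊+1))⁻¹ ≤ (2:ℝ) ^ (-s) := by
      rw [← Real.rpow_natCast 2 (⌊s⌋₊+1), ← Real.rpow_neg (by norm_num : (0:ℝ) ≤ 2)]
      apply Real.rpow_le_rpow_left_iff (by norm_num : (1:ℝ) < 2) |>.mpr
      push_cast
      linarith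
    rw [hδp]
    exact le_trans hstep1 hstep2
  have hcov : (coverN (CSet d b B) (δ^p) : ℝ) ≤ (2:ℝ)^(gseq d b B n) :=
    by exact_mod_cast coverN_le_pow d b B n (δ^p) hup
  -- membership condition gives s * t ≤ g n
  have hst : s * t ≤ (gseq d b B n : ℝ) := by
    have h1 : (2:ℝ)^(s*t) ≤ (2:ℝ)^((gseq d b B n : ℝ)) := by
      rw [Real.rpow_natCast]
      calc (2:ℝ)^(s*t) = δ ^ (-(p*t)) := hδpt.symm
        _ ≤ (coverN (CSet d b B) (δ^p) : ℝ) := hpc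
        _ ≤ (2:ℝ)^(gseq d b B n) := hcov
    exact (Real.rpow_le_rpow_left_iff (by norm_num : (1:ℝ) < 2)).mp h1
  -- good region
  have hcn : cseq d b B (k+1) ≤ n := by
    have hcW : ((cseq d b B (k+1)):ℝ) ≤ ε * W := by
      have h1 : ((k:ℝ)+1) * cseq d b B (k+1) ≤ (W:ℝ) := by
        have h1' := cseq_le_W (d := d) (b := b) (B := B) k
        rw [← hw, ← hWdef] at h1'
        exact_mod_cast h1'
      have hεk : 1 ≤ ε * ((k:ℝ)+1) := by
        have h2' : (1/ε) ≤ (k:ℝ) := le_trans hK₁ (by exact_mod_cast hk1)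
        rw [div_le_iff₀ hε] at h2'
        nlinarith
      have hc0 : (0:ℝ) ≤ (cseq d b B (k+1):ℝ) := Nat.cast_nonneg _
      calc ((cseq d b B (k+1)):ℝ) = 1 * cseq d b B (k+1) := (one_mul _).symm
        _ ≤ (ε*((k:ℝ)+1)) * cseq d b B (k+1) := mul_le_mul_of_nonneg_right hεk hc0
        _ = ε * (((k:ℝ)+1) * cseq d b B (k+1)) := by ring
        _ ≤ ε * W := mul_le_mul_of_nonneg_left h1 hε.le
    have hfin : ((cseq d b B (k+1)):ℝ) < n := by
      have hn_ge_s : s ≤ (n:ℝ) := by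
        rw [hndef]
        push_cast
        have := Nat.cast_nonneg (α := ℝ) d
        linarith
      have hεWs : ε * W < s := by
        rw [hsdef]
        calc ε * W = (W:ℝ) * ε := by ring
          _ < (W:ℝ) * p := mul_lt_mul_of_pos_left hpε hW0
      linarith
    exact_mod_cast hfin.le
  have hgood : (gseq d b B n : ℝ) ≤ n * b - (k+1) := gseq_good hb hbB k n hcn hnw
  -- contradiction
  have hnb : (n:ℝ) ≤ s + 1 + d := by
    rw [hndef]
    push_cast
    linarith
  have hkb : (1+(d:ℝ))*b < (k:ℝ)+1 := by
    have : (1+(d:ℝ))*b ≤ (k:ℝ) := le_trans hK₂ (by exact_mod_cast hk2)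
    linarith
  have hsb : s * b ≤ s * t := mul_le_mul_of_nonneg_left ht hs0.le
  have h5 : (n:ℝ)*b ≤ (s+1+d)*b := mul_le_mul_of_nonneg_right hnb hb.le
  linarith


lemma cre_bddle (t : ℝ) :
    Filter.IsBoundedUnder (· ≤ ·) (𝓝[>] (0:ℝ)) (fun δ : ℝ => cre (CSet d b B) t δ) := by
  refine ⟨1, eventually_map.mpr ?_⟩
  filter_upwards [mem_L 1 one_pos] with δ hδ
  exact (cre_between δ hδ.1 hδ.2 t).2

lemma cre_nonneg_ev (t : ℝ) :
    ∀ᶠ δ in 𝓝[>] (0:ℝ), 0 ≤ cre (CSet d b B) t δ := by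
  filter_upwards [mem_L 1 one_pos] with δ hδ
  exact (cre_between δ hδ.1 hδ.2 t).1

lemma creT_CSet (t : ℝ) (ht : b ≤ t) :
    Filter.liminf (fun δ : ℝ => cre (CSet d b B) t δ) (𝓝[>] (0:ℝ)) = 0 := by
  apply le_antisymm
  · apply le_of_forall_pos_le_add
    intro ε hε
    rw [zero_add]
    apply Filter.liminf_le_of_frequently_le ?_ ⟨0, eventually_map.mpr (cre_nonneg_ev hb hbB hBd t)⟩
    have htd : Tendsto (fun k => ((2:ℝ)^(wseq d b B (k+1) - (d+1)))⁻¹) atTop (𝓝[>] (0:ℝ)) := by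
      apply tendsto_inv_pow
      filter_upwards [Filter.eventually_ge_atTop d] with k hk
      have h2w : 2^(k+1) ≤ wseq d b B (k+1) := two_pow_le_wseq d b B (k+1)
      have hk2 : k + d + 1 ≤ 2^(k+1) := by
        have h1 : k < 2^k := Nat.lt_two_pow_self
        have : 2^(k+1) = 2^k + 2^k := by ring
        omega
      omega
    apply htd.frequently
    apply Filter.Eventually.frequently
    filter_upwards [cre_small hb hbB hBd t ht (min ε 1) (lt_min hε one_pos) (min_le_right _ _)]
      with k hk
    exact le_trans hk (min_le_left _ _)
  · exact Filter.le_liminf_of_le ((cre_bddle hb hbB hBd t).isCoboundedUnder_flip)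
      (cre_nonneg_ev hb hbB hBd t)

end dims
end CondProof

theorem exists_condensation_with_zero_creT
    (d : ℕ) (b B : ℝ) (hb : 0 < b) (hbB : b < B) (hBd : B ≤ (d : ℝ)) :
    ∃ C : Set (EuclideanSpace ℝ (Fin d)),
      C ⊆ {x : EuclideanSpace ℝ (Fin d) | ∀ i, x i ∈ Set.Icc (0 : ℝ) 1} ∧
      IsCompact C ∧ lbDim C = b ∧ ubDim C = B ∧
      ∀ t : ℝ, b ≤ t → creT C t = 0 := by
  refine ⟨CondProof.CSet d b B, CondProof.CSet_subset_cube d b B,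
    CondProof.CSet_isCompact d b B, ?_, ?_, ?_⟩
  · exact le_antisymm (CondProof.lbDim_le hb hbB hBd) (CondProof.lbDim_ge hb hbB hBd)
  · exact le_antisymm (CondProof.ubDim_le hb hbB hBd) (CondProof.ubDim_ge hb hbB hBd)
  · intro t ht
    exact CondProof.creT_CSet hb hbB hBd t ht
end

section
/- Let d ∈ ℕ and let 0 < b < B ≤ d. Then there exists a compact set C ⊆ [0,1]^d such that lb-dim C = b, ub-dim C = B, and the covering regularity exponent satisfies p_t(C) = (b/t)·(d−t)/(d−b) for all t ∈ (b,B). -/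
open Set Filter Topology Metric MeasureTheory


namespace CREWork

noncomputable section
open scoped Classical

variable (d : ℕ) (b B : ℝ)

/-- intermediate target levels increasing to `B`. -/
def Bk (k : ℕ) : ℝ := B - (B - b) / (k + 2)

def uc : ℕ → ℕ × ℕ
  | 0 => (1, 0)
  | k + 1 =>
      let p := uc k
      let L : ℕ := ⌈(Bk b B k * p.1 - d * p.2) / ((d : ℝ) - Bk b B k)⌉₊
      (⌈((d : ℝ) * (p.2 + L)) / b⌉₊, p.2 + L)

def useq (k : ℕ) : ℕ := (uc d b B k).1
def cseq (k : ℕ) : ℕ := (uc d b B k).2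
def Lk (k : ℕ) : ℕ :=
  ⌈(Bk b B k * useq d b B k - d * cseq d b B k) / ((d : ℝ) - Bk b B k)⌉₊
def vseq (k : ℕ) : ℕ := useq d b B k + Lk d b B k

lemma useq_zero : useq d b B 0 = 1 := by simp [useq, uc]
lemma cseq_zero : cseq d b B 0 = 0 := by simp [cseq, uc]
lemma cseq_succ (k : ℕ) : cseq d b B (k + 1) = cseq d b B k + Lk d b B k := by
  simp [cseq, uc, Lk, useq]
lemma useq_succ (k : ℕ) :
    useq d b B (k + 1) = ⌈((d : ℝ) * (cseq d b B (k + 1))) / b⌉₊ := by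
  show (uc d b B (k+1)).1 = _
  rw [uc, cseq_succ]
  simp [Lk, useq, cseq]

variable {d b B}

section hyps
variable (hb : 0 < b) (hbB : b < B) (hBd : B ≤ (d : ℝ))

include hbB in
lemma Bk_lt_B (k : ℕ) : Bk b B k < B := by
  have h2 : (0:ℝ) < (k:ℝ) + 2 := by positivity
  have : 0 < (B - b) / (k + 2) := by
    apply div_pos <;> linarith
  unfold Bk; linarith

include hbB in
lemma b_lt_Bk (k : ℕ) : b < Bk b B k := by
  have h2 : (0:ℝ) < (k:ℝ) + 2 := by positivity
  have : (B - b) / (k + 2) < B - b := by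
    rw [div_lt_iff₀ h2]
    nlinarith
  unfold Bk; linarith

include hbB hBd in
lemma Bk_lt_d (k : ℕ) : Bk b B k < (d:ℝ) := lt_of_lt_of_le (Bk_lt_B hbB k) hBd

include hb hbB hBd in
lemma d_pos : (0:ℝ) < (d:ℝ) := by linarith

include hbB in
lemma Bk_mono {j k : ℕ} (h : j ≤ k) : Bk b B j ≤ Bk b B k := by
  unfold Bk
  have h1 : (0:ℝ) < (j:ℝ) + 2 := by positivity
  have h2 : (0:ℝ) < (k:ℝ) + 2 := by positivity
  have hjk : (j:ℝ) + 2 ≤ (k:ℝ) + 2 := by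
    have := (Nat.cast_le (α := ℝ)).2 h; linarith
  have : (B - b) / (k + 2) ≤ (B - b) / (j + 2) := by
    apply div_le_div_of_nonneg_left (by linarith) h1 hjk
  linarith

include hbB in
lemma Bk_eventually_ge {t : ℝ} (ht : t < B) : ∃ K : ℕ, ∀ k, K ≤ k → t ≤ Bk b B k := by
  obtain ⟨K, hK⟩ := exists_nat_gt ((B - b) / (B - t))
  refine ⟨K, fun k hk => ?_⟩
  have h2 : (0:ℝ) < (k:ℝ) + 2 := by positivity
  have hBt : 0 < B - t := by linarith
  have hKk : ((B - b) / (B - t)) < (k:ℝ) + 2 := by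
    have : (K:ℝ) ≤ (k:ℝ) := (Nat.cast_le (α := ℝ)).2 hk
    linarith
  have : (B - b) / ((k:ℝ) + 2) < B - t := by
    rw [div_lt_iff₀ h2]
    rw [div_lt_iff₀ hBt] at hKk
    nlinarith
  unfold Bk; linarith

include hb in
lemma I1 (k : ℕ) : (d:ℝ) * cseq d b B k ≤ b * useq d b B k := by
  cases k with
  | zero => simp [useq_zero, cseq_zero]; positivity
  | succ k =>
      rw [useq_succ]
      have h := Nat.le_ceil (((d : ℝ) * (cseq d b B (k + 1))) / b)
      rw [div_le_iff₀ hb] at h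
      linarith [h]

include hb hbB hBd in
lemma useq_pos (k : ℕ) : 1 ≤ useq d b B k := by
  induction k with
  | zero => simp [useq_zero]
  | succ k ih =>
      rw [useq_succ]
      rw [Nat.one_le_iff_ne_zero, ← Nat.pos_iff_ne_zero, Nat.ceil_pos]
      have hLpos : 1 ≤ Lk d b B k := by
        rw [Nat.one_le_iff_ne_zero, ← Nat.pos_iff_ne_zero, Lk, Nat.ceil_pos]
        apply div_pos
        · have h1 := I1 hb (d := d) (B := B) k
          have h2 := b_lt_Bk hbB (k := k)
          have h3 : (1:ℝ) ≤ (useq d b B k : ℝ) := by exact_mod_cast ih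
          nlinarith
        · linarith [Bk_lt_d hbB hBd (k := k)]
      have : 1 ≤ cseq d b B (k+1) := by
        rw [cseq_succ]; omega
      have h1 : (1:ℝ) ≤ ((cseq d b B (k+1) : ℕ) : ℝ) := by exact_mod_cast this
      have hd := d_pos hb hbB hBd
      positivity

include hb hbB hBd in
lemma Lk_pos (k : ℕ) : 1 ≤ Lk d b B k := by
  rw [Nat.one_le_iff_ne_zero, ← Nat.pos_iff_ne_zero, Lk, Nat.ceil_pos]
  apply div_pos
  · have h1 := I1 hb (d := d) (B := B) k
    have h2 := b_lt_Bk hbB (k := k)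
    have h3 : (1:ℝ) ≤ (useq d b B k : ℝ) := by exact_mod_cast useq_pos hb hbB hBd k
    nlinarith
  · linarith [Bk_lt_d hbB hBd (k := k)]

include hb in
lemma I2' (k : ℕ) : b * useq d b B k ≤ (d:ℝ) * cseq d b B k + b := by
  cases k with
  | zero => simp [useq_zero, cseq_zero]
  | succ k =>
      rw [useq_succ]
      have harg : (0:ℝ) ≤ ((d : ℝ) * (cseq d b B (k + 1))) / b := by positivity
      have h := Nat.ceil_lt_add_one harg
      have h2 : (⌈((d : ℝ) * (cseq d b B (k + 1))) / b⌉₊ : ℝ) * b <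
          ((d : ℝ) * (cseq d b B (k + 1))) + b := by
        rw [← lt_div_iff₀ hb] at *
        calc (⌈((d : ℝ) * (cseq d b B (k + 1))) / b⌉₊ : ℝ)
            < ((d : ℝ) * (cseq d b B (k + 1))) / b + 1 := h
          _ = (((d : ℝ) * (cseq d b B (k + 1))) + b) / b := by field_simp
      linarith [h2]

include hb hbB hBd in
lemma I3 (k : ℕ) : Bk b B k * vseq d b B k ≤ (d:ℝ) * cseq d b B (k+1) := by
  have hdB : (0:ℝ) < (d:ℝ) - Bk b B k := by linarith [Bk_lt_d hbB hBd (k := k)]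
  have h := Nat.le_ceil ((Bk b B k * useq d b B k - d * cseq d b B k) / ((d : ℝ) - Bk b B k))
  rw [div_le_iff₀ hdB] at h
  have h' : Bk b B k * useq d b B k - d * cseq d b B k ≤ (Lk d b B k : ℝ) * ((d : ℝ) - Bk b B k) := by
    rw [Lk]; exact h
  have : (vseq d b B k : ℝ) = (useq d b B k : ℝ) + (Lk d b B k : ℝ) := by
    unfold vseq; push_cast; ring
  rw [this, cseq_succ]
  push_cast
  nlinarith [h']

include hb hbB hBd in
lemma I4 (k : ℕ) : (d:ℝ) * cseq d b B (k+1) < Bk b B k * vseq d b B k + d := by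
  have hdB : (0:ℝ) < (d:ℝ) - Bk b B k := by linarith [Bk_lt_d hbB hBd (k := k)]
  have hBkpos : (0:ℝ) < Bk b B k := lt_trans hb (b_lt_Bk hbB (k := k))
  have harg : (0:ℝ) ≤ (Bk b B k * useq d b B k - d * cseq d b B k) / ((d : ℝ) - Bk b B k) := by
    apply div_nonneg _ (le_of_lt hdB)
    have h1 := I1 hb (d := d) (B := B) k
    have h2 := b_lt_Bk hbB (k := k)
    have h3 : (0:ℝ) ≤ (useq d b B k : ℝ) := by positivity
    nlinarith
  have h := Nat.ceil_lt_add_one harg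
  have h2 : ((Lk d b B k : ℕ) : ℝ) * ((d : ℝ) - Bk b B k)
      < (Bk b B k * useq d b B k - d * cseq d b B k) + ((d : ℝ) - Bk b B k) := by
    have hL : ((Lk d b B k : ℕ) : ℝ) < (Bk b B k * useq d b B k - d * cseq d b B k) / ((d : ℝ) - Bk b B k) + 1 := by
      rw [Lk]; exact h
    have := (mul_lt_mul_of_pos_right hL hdB)
    calc ((Lk d b B k : ℕ) : ℝ) * ((d : ℝ) - Bk b B k)
        < ((Bk b B k * useq d b B k - d * cseq d b B k) / ((d : ℝ) - Bk b B k) + 1) * ((d : ℝ) - Bk b B k) := this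
      _ = (Bk b B k * useq d b B k - d * cseq d b B k) + ((d : ℝ) - Bk b B k) := by
          field_simp
  have hv : (vseq d b B k : ℝ) = (useq d b B k : ℝ) + (Lk d b B k : ℝ) := by
    unfold vseq; push_cast; ring
  rw [hv, cseq_succ]
  push_cast
  nlinarith [h2]

include hb hbB hBd in
lemma useq_lt_vseq (k : ℕ) : useq d b B k < vseq d b B k := by
  have := Lk_pos hb hbB hBd (k := k); unfold vseq; omega

include hb hbB hBd in
lemma vseq_lt_useq_succ (k : ℕ) : vseq d b B k < useq d b B (k+1) := by
  have h1 := I1 hb (d := d) (B := B) (k+1)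
  have h2 := I3 hb hbB hBd (d := d) (k := k)
  have h3 := b_lt_Bk hbB (B := B) (k := k)
  have hv : (0:ℝ) < (vseq d b B k : ℝ) := by
    have := useq_pos hb hbB hBd (d := d) (B := B) k
    have := useq_lt_vseq hb hbB hBd (d := d) (B := B) k
    have : 1 ≤ vseq d b B k := by omega
    exact_mod_cast Nat.lt_of_lt_of_le Nat.zero_lt_one this
  have : b * (vseq d b B k : ℝ) < b * (useq d b B (k+1) : ℝ) := by nlinarith
  have := (mul_lt_mul_iff_right₀ hb).1 this
  exact_mod_cast this

include hb hbB hBd in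
lemma useq_strictMono : StrictMono (useq d b B) := by
  apply strictMono_nat_of_lt_succ
  intro k
  exact lt_trans (useq_lt_vseq hb hbB hBd k) (vseq_lt_useq_succ hb hbB hBd k)

include hb hbB hBd in
lemma useq_ge (k : ℕ) : k + 1 ≤ useq d b B k := by
  induction k with
  | zero => simp [useq_zero]
  | succ k ih =>
      have h := useq_strictMono hb hbB hBd (d := d) (B := B) (Nat.lt_succ_self k)
      simp only [Nat.succ_eq_add_one] at h
      omega

include hb hbB hBd in
lemma vseq_le_useq_of_lt {j k : ℕ} (h : j < k) : vseq d b B j ≤ useq d b B k := by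
  have h1 := vseq_lt_useq_succ hb hbB hBd (d := d) (B := B) j
  rcases Nat.lt_or_ge (j+1) k with h2 | h2
  · have := useq_strictMono hb hbB hBd (d := d) (B := B) h2
    omega
  · have hk : k = j + 1 := by omega
    subst hk
    omega

end hyps

section cnt
variable (d b B)

/-- the set of "free" digit positions -/
def Sp (j : ℕ) : Prop := ∃ k, useq d b B k ≤ j ∧ j < vseq d b B k

def cnt (M : ℕ) : ℕ := ((Finset.range M).filter (Sp d b B)).card

variable {d b B}

lemma cnt_zero : cnt d b B 0 = 0 := by simp [cnt]

lemma cnt_succ (M : ℕ) :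
    cnt d b B (M + 1) = cnt d b B M + (if Sp d b B M then 1 else 0) := by
  unfold cnt
  rw [Finset.range_add_one, Finset.filter_insert]
  split
  · rw [Finset.card_insert_of_notMem (by simp)]
  · simp

lemma cnt_mono : Monotone (cnt d b B) := by
  intro m m' h
  unfold cnt
  apply Finset.card_le_card
  apply Finset.filter_subset_filter
  intro x hx
  simp only [Finset.mem_range] at *
  omega

lemma cnt_le (M : ℕ) : cnt d b B M ≤ M := by
  calc cnt d b B M ≤ (Finset.range M).card := Finset.card_filter_le _ _
    _ = M := Finset.card_range M

lemma cnt_add_le (M n : ℕ) : cnt d b B (M + n) ≤ cnt d b B M + n := by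
  induction n with
  | zero => simp
  | succ n ih =>
      rw [← Nat.add_assoc, cnt_succ]
      split <;> omega

lemma cnt_const {m m' : ℕ} (h : m ≤ m') (H : ∀ j, m ≤ j → j < m' → ¬ Sp d b B j) :
    cnt d b B m' = cnt d b B m := by
  induction m', h using Nat.le_induction with
  | base => rfl
  | succ n hn ih =>
      rw [cnt_succ, if_neg (H n hn (by omega))]
      exact ih (fun j h1 h2 => H j h1 (by omega))

lemma cnt_full {m m' : ℕ} (h : m ≤ m') (H : ∀ j, m ≤ j → j < m' → Sp d b B j) :
    cnt d b B m' = cnt d b B m + (m' - m) := by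
  induction m', h using Nat.le_induction with
  | base => simp
  | succ n hn ih =>
      rw [cnt_succ, if_pos (H n hn (by omega)), ih (fun j h1 h2 => H j h1 (by omega))]
      omega

section hyps2
variable (hb : 0 < b) (hbB : b < B) (hBd : B ≤ (d : ℝ))

include hb hbB hBd in
lemma not_Sp_flat (k : ℕ) : ∀ j, vseq d b B k ≤ j → j < useq d b B (k+1) → ¬ Sp d b B j := by
  rintro j h1 h2 ⟨k', hk1, hk2⟩
  rcases lt_trichotomy k' k with h | h | h
  · have hv : vseq d b B k' ≤ useq d b B k := vseq_le_useq_of_lt hb hbB hBd h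
    have := useq_lt_vseq hb hbB hBd (d := d) (B := B) k
    omega
  · subst h; omega
  · have : useq d b B (k+1) ≤ useq d b B k' := (useq_strictMono hb hbB hBd).monotone h
    omega

lemma Sp_rise (k : ℕ) : ∀ j, useq d b B k ≤ j → j < vseq d b B k → Sp d b B j :=
  fun j h1 h2 => ⟨k, h1, h2⟩

include hb hbB hBd in
lemma cnt_useq (k : ℕ) : cnt d b B (useq d b B k) = cseq d b B k := by
  induction k with
  | zero =>
      rw [useq_zero, cseq_zero]
      have : cnt d b B 1 = cnt d b B 0 := by
        apply cnt_const (by omega)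
        rintro j h1 h2 ⟨k', hk1, hk2⟩
        have := useq_pos hb hbB hBd (d := d) (B := B) k'
        omega
      rw [this, cnt_zero]
  | succ k ih =>
      have h1 : cnt d b B (vseq d b B k) = cnt d b B (useq d b B k) + (vseq d b B k - useq d b B k) :=
        cnt_full (le_of_lt (useq_lt_vseq hb hbB hBd k)) (Sp_rise k)
      have h2 : cnt d b B (useq d b B (k+1)) = cnt d b B (vseq d b B k) :=
        cnt_const (le_of_lt (vseq_lt_useq_succ hb hbB hBd k)) (not_Sp_flat hb hbB hBd k)
      rw [h2, h1, ih, cseq_succ]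
      unfold vseq
      omega

include hb hbB hBd in
lemma cnt_vseq (k : ℕ) : cnt d b B (vseq d b B k) = cseq d b B (k+1) := by
  have h1 : cnt d b B (vseq d b B k) = cnt d b B (useq d b B k) + (vseq d b B k - useq d b B k) :=
    cnt_full (le_of_lt (useq_lt_vseq hb hbB hBd k)) (Sp_rise k)
  rw [h1, cnt_useq hb hbB hBd, cseq_succ]
  unfold vseq
  omega

include hb hbB hBd in
lemma cnt_flat {k m : ℕ} (h1 : vseq d b B k ≤ m) (h2 : m ≤ useq d b B (k+1)) :
    cnt d b B m = cseq d b B (k+1) := by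
  have : cnt d b B m = cnt d b B (vseq d b B k) :=
    cnt_const h1 (fun j hj1 hj2 => not_Sp_flat hb hbB hBd k j hj1 (by omega))
  rw [this, cnt_vseq hb hbB hBd]

include hb hbB hBd in
lemma cnt_rise {k m : ℕ} (h1 : useq d b B k ≤ m) (h2 : m ≤ vseq d b B k) :
    cnt d b B m = cseq d b B k + (m - useq d b B k) := by
  have : cnt d b B m = cnt d b B (useq d b B k) + (m - useq d b B k) :=
    cnt_full h1 (fun j hj1 hj2 => Sp_rise k j hj1 (by omega))
  rw [this, cnt_useq hb hbB hBd]

include hb hbB hBd in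
lemma exists_block {m : ℕ} (hm : 1 ≤ m) :
    ∃ k, useq d b B k ≤ m ∧ m < useq d b B (k+1) := by
  set P : ℕ → Prop := fun k => useq d b B k ≤ m with hP
  have h0 : P 0 := by simp [hP, useq_zero, hm]
  refine ⟨Nat.findGreatest P m, Nat.findGreatest_spec (Nat.zero_le m) h0, ?_⟩
  by_contra hcon
  push_neg at hcon
  rcases Nat.lt_or_ge m (Nat.findGreatest P m + 1) with h | h
  · have h2 := useq_ge hb hbB hBd (d := d) (B := B) (Nat.findGreatest P m + 1)
    omega
  · exact Nat.findGreatest_is_greatest (Nat.lt_succ_self _) h hcon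

include hb hbB hBd in
lemma exists_vblock {m : ℕ} {k0 : ℕ} (hm : vseq d b B k0 ≤ m) :
    ∃ k, k0 ≤ k ∧ vseq d b B k ≤ m ∧ m < vseq d b B (k+1) := by
  set P : ℕ → Prop := fun k => vseq d b B k ≤ m with hP
  have hk0m : k0 ≤ m := by
    have h1 := useq_ge hb hbB hBd (d := d) (B := B) k0
    have h2 := useq_lt_vseq hb hbB hBd (d := d) (B := B) k0
    omega
  have hspec : P (Nat.findGreatest P m) := Nat.findGreatest_spec (P := P) hk0m hm
  refine ⟨Nat.findGreatest P m, Nat.le_findGreatest hk0m hm, hspec, ?_⟩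
  by_contra hcon
  push_neg at hcon
  rcases Nat.lt_or_ge m (Nat.findGreatest P m + 1) with h | h
  · have h2 := useq_ge hb hbB hBd (d := d) (B := B) (Nat.findGreatest P m + 1)
    have h3 := useq_lt_vseq hb hbB hBd (d := d) (B := B) (Nat.findGreatest P m + 1)
    omega
  · exact Nat.findGreatest_is_greatest (Nat.lt_succ_self _) h hcon

include hb hbB hBd in
lemma G1 (m : ℕ) : b * m ≤ (d:ℝ) * cnt d b B m + b := by
  rcases Nat.eq_zero_or_pos m with h | h
  · subst h; simp [cnt_zero]; try positivity
  obtain ⟨k, hk1, hk2⟩ := exists_block hb hbB hBd h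
  have hbd : b ≤ (d:ℝ) := by linarith
  rcases le_or_gt m (vseq d b B k) with hm | hm
  · -- rise
    rw [cnt_rise hb hbB hBd hk1 hm]
    have hc : ((cseq d b B k + (m - useq d b B k) : ℕ) : ℝ)
        = (cseq d b B k : ℝ) + ((m : ℝ) - (useq d b B k : ℝ)) := by
      push_cast [Nat.cast_sub hk1]
      ring
    rw [hc]
    have h1 := I2' hb (d := d) (B := B) k
    have h2 : (useq d b B k : ℝ) ≤ (m : ℝ) := by exact_mod_cast hk1
    nlinarith
  · -- flat
    rw [cnt_flat hb hbB hBd (le_of_lt hm) (le_of_lt hk2)]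
    have h1 := I2' hb (d := d) (B := B) (k+1)
    have h2 : (m : ℝ) ≤ (useq d b B (k+1) : ℝ) := by
      exact_mod_cast le_of_lt hk2
    nlinarith

include hb hbB hBd in
lemma G2 (m : ℕ) : (d:ℝ) * cnt d b B m ≤ B * m + d := by
  rcases Nat.eq_zero_or_pos m with h | h
  · subst h; simp [cnt_zero]; try positivity
  obtain ⟨k, hk1, hk2⟩ := exists_block hb hbB hBd h
  have hBkB := Bk_lt_B hbB (b := b) (k := k)
  have hI4 := I4 hb hbB hBd (d := d) (k := k)
  have hv1 : (0:ℝ) ≤ (vseq d b B k : ℝ) := by positivity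
  rcases le_or_gt m (vseq d b B k) with hm | hm
  · -- rise
    rw [cnt_rise hb hbB hBd hk1 hm]
    have hc : ((cseq d b B k + (m - useq d b B k) : ℕ) : ℝ)
        = (cseq d b B k : ℝ) + ((m : ℝ) - (useq d b B k : ℝ)) := by
      push_cast [Nat.cast_sub hk1]
      ring
    rw [hc]
    -- d * cnt m = d * c_{k+1} - d * (v - m)
    have hcv : (d:ℝ) * cseq d b B (k+1) = (d:ℝ) * cseq d b B k + (d:ℝ) * ((vseq d b B k : ℝ) - (useq d b B k : ℝ)) := by
      rw [cseq_succ]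
      unfold vseq
      push_cast
      try ring
    have hvm : (m:ℝ) ≤ (vseq d b B k : ℝ) := by exact_mod_cast hm
    have hBd2 : B ≤ (d:ℝ) := hBd
    have hB0 : (0:ℝ) < B := by linarith
    nlinarith
  · -- flat
    rw [cnt_flat hb hbB hBd (le_of_lt hm) (le_of_lt hk2)]
    have hvm : (vseq d b B k : ℝ) ≤ (m:ℝ) := by exact_mod_cast le_of_lt hm
    have hB0 : (0:ℝ) < B := by linarith
    nlinarith

end hyps2
end cnt

/-- the limiting exponent value -/
def Pc (d : ℕ) (b t : ℝ) : ℝ := b / t * (((d:ℝ) - t) / ((d:ℝ) - b))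

section cl
variable (hb : 0 < b) (hbB : b < B) (hBd : B ≤ (d : ℝ))

lemma Pc_pos {t : ℝ} (hb : 0 < b) (hbt : b < t) (htd : t < (d:ℝ)) : 0 < Pc d b t := by
  unfold Pc
  have h1 : 0 < t := lt_trans hb hbt
  have h2 : (0:ℝ) < (d:ℝ) - t := by linarith
  have h3 : (0:ℝ) < (d:ℝ) - b := by linarith
  positivity

lemma Pc_le_one {t : ℝ} (hb : 0 < b) (hbt : b < t) (htd : t < (d:ℝ)) : Pc d b t ≤ 1 := by
  unfold Pc
  have h1 : 0 < t := lt_trans hb hbt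
  have h3 : (0:ℝ) < (d:ℝ) - b := by linarith
  have e1 : b / t ≤ 1 := by rw [div_le_one h1]; linarith
  have e2 : ((d:ℝ) - t) / ((d:ℝ) - b) ≤ 1 := by rw [div_le_one h3]; linarith
  have e3 : 0 ≤ b / t := by positivity
  have e4 : 0 ≤ ((d:ℝ) - t) / ((d:ℝ) - b) := by
    apply div_nonneg <;> linarith
  nlinarith

lemma Pc_id {t : ℝ} (hb : 0 < b) (hbt : b < t) (htd : t < (d:ℝ)) :
    Pc d b t * (t * ((d:ℝ) - b)) = b * ((d:ℝ) - t) := by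
  unfold Pc
  have h1 : t ≠ 0 := ne_of_gt (lt_trans hb hbt)
  have h3 : (d:ℝ) - b ≠ 0 := by
    have : b < (d:ℝ) := lt_trans hbt htd
    intro h; linarith [sub_eq_zero.1 h]
  field_simp
  try ring

set_option maxHeartbeats 1000000 in
include hb hbB hBd in
lemma CL1 {t ε : ℝ} (ht : b < t) (htB : t < B) (hε : 0 < ε) :
    ∃ K : ℕ, 1 ≤ K ∧ ∀ n : ℕ, K ≤ n → ∃ m : ℕ, 1 ≤ m ∧ m ≤ n ∧
      (Pc d b t - ε) * n ≤ m ∧ t * m + d ≤ (d:ℝ) * cnt d b B m := by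
  have ht0 : 0 < t := lt_trans hb ht
  have htd : t < (d:ℝ) := lt_of_lt_of_le htB hBd
  have hdt : (0:ℝ) < (d:ℝ) - t := by linarith
  have hdb : (0:ℝ) < (d:ℝ) - b := by linarith
  have hd0 : (0:ℝ) < (d:ℝ) := by linarith
  set t' : ℝ := (t + B)/2 with ht'def
  have htt' : t < t' := by rw [ht'def]; linarith
  have ht'B : t' < B := by rw [ht'def]; linarith
  obtain ⟨k₁, hk₁⟩ := Bk_eventually_ge hbB ht'B
  have htt'' : 0 < t' - t := by linarith
  obtain ⟨N1, hN1⟩ := exists_nat_ge ((2*t + (d:ℝ))/(t' - t))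
  have hN1' : 2*t + (d:ℝ) ≤ (t' - t) * N1 := by
    rw [div_le_iff₀ htt''] at hN1; linarith
  set C9 : ℝ := b*(b+(d:ℝ))/(t*((d:ℝ)-b)) + (b+(d:ℝ))/t + 1 with hC9
  obtain ⟨N2, hN2⟩ := exists_nat_ge (C9/ε)
  have hN2' : C9 ≤ ε * N2 := by rw [div_le_iff₀ hε] at hN2; linarith
  set ks : ℕ := max k₁ (max N1 N2) with hks
  refine ⟨vseq d b B ks, ?_, ?_⟩
  · have h1 := useq_pos hb hbB hBd (d := d) (B := B) ks
    have h2 := useq_lt_vseq hb hbB hBd (d := d) (B := B) ks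
    omega
  intro n hn
  obtain ⟨k, hkks, hv1, hv2⟩ := exists_vblock hb hbB hBd hn
  have hk1 : k₁ ≤ k := le_trans (le_max_left _ _) hkks
  have hkN1 : N1 ≤ k := le_trans (le_trans (le_max_left _ _) (le_max_right _ _)) hkks
  have hkN2 : N2 ≤ k := le_trans (le_trans (le_max_right _ _) (le_max_right _ _)) hkks
  set V : ℕ := vseq d b B k with hVdef
  set U : ℕ := useq d b B (k+1) with hUdef
  set c' : ℕ := cseq d b B (k+1) with hc'def
  have hBkt : t' ≤ Bk b B k := hk₁ k hk1
  have hI3 : Bk b B k * V ≤ (d:ℝ) * c' := I3 hb hbB hBd k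
  have hVnat : N1 ≤ V ∧ 1 ≤ V ∧ 1 ≤ U ∧ N2 ≤ U ∧ V < U ∧ 1 ≤ n := by
    have h1 := useq_ge hb hbB hBd (d := d) (B := B) k
    have h1' := useq_ge hb hbB hBd (d := d) (B := B) (k+1)
    have h2 := useq_lt_vseq hb hbB hBd (d := d) (B := B) k
    have h3 := vseq_lt_useq_succ hb hbB hBd (d := d) (B := B) k
    refine ⟨by omega, by omega, by omega, by omega, by omega, by omega⟩
  obtain ⟨hVN1, hV1, hU1, hUN2, hVU, hn1⟩ := hVnat
  have hVN1' : (N1:ℝ) ≤ (V:ℝ) := by exact_mod_cast hVN1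
  have hV0 : (0:ℝ) ≤ (V:ℝ) := by positivity
  have hU0 : (0:ℝ) ≤ (U:ℝ) := by positivity
  have hU0' : (0:ℝ) < (U:ℝ) := by exact_mod_cast hU1
  have hn0 : (0:ℝ) ≤ (n:ℝ) := by positivity
  have hI1' : (d:ℝ) * c' ≤ b * U := I1 hb (k+1)
  have hI2'' : b * U ≤ (d:ℝ) * c' + b := I2' hb (k+1)
  have harg : t * ((V:ℝ) + 2) + (d:ℝ) ≤ (d:ℝ) * c' := by
    have h1 : (t'-t) * (N1:ℝ) ≤ (t'-t) * V :=
      mul_le_mul_of_nonneg_left hVN1' (le_of_lt htt'')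
    have h2 : t' * V ≤ (d:ℝ)*c' := by
      have h3 := mul_le_mul_of_nonneg_right hBkt hV0
      linarith
    nlinarith [h1, h2, hN1']
  by_cases hA : t * n + (d:ℝ) ≤ (d:ℝ) * cnt d b B n
  · refine ⟨n, hn1, le_refl n, ?_, hA⟩
    have hPc1 := Pc_le_one (d := d) hb ht htd
    have h5 : (Pc d b t - ε) * n ≤ 1 * n :=
      mul_le_mul_of_nonneg_right (by linarith) hn0
    linarith
  · push_neg at hA
    obtain ⟨m, hmdef⟩ : ∃ m : ℕ, m = ⌊((d:ℝ) * c' - (d:ℝ))/t⌋₊ := ⟨_, rfl⟩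
    have hVt2 : (0:ℝ) ≤ t * ((V:ℝ)+2) := by positivity
    have hnum0 : (0:ℝ) ≤ ((d:ℝ)*c' - (d:ℝ))/t := by
      apply div_nonneg _ (le_of_lt ht0)
      linarith only [harg, hVt2]
    have hm1 : t * m ≤ (d:ℝ)*c' - (d:ℝ) := by
      rw [hmdef]
      have h := Nat.floor_le hnum0
      rw [le_div_iff₀ ht0] at h
      linarith only [h]
    have hm2 : V + 1 ≤ m := by
      rw [hmdef]
      apply Nat.le_floor
      rw [le_div_iff₀ ht0]
      push_cast
      nlinarith only [harg, ht0]
    have hVm : (V:ℕ) ≤ m := by omega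
    have hm0 : 1 ≤ m := by omega
    have hcntV : cnt d b B V = c' := cnt_vseq hb hbB hBd k
    have hcnt : (c' : ℝ) ≤ (cnt d b B m : ℝ) := by
      have h6 := cnt_mono (d := d) (b := b) (B := B) hVm
      rw [hcntV] at h6
      exact_mod_cast h6
    have hfinal : t * m + (d:ℝ) ≤ (d:ℝ) * cnt d b B m := by
      have h9 := mul_le_mul_of_nonneg_left hcnt (le_of_lt hd0)
      linarith only [h9, hm1]
    have hkey : m ≤ n ∧ (n:ℝ) * ((d:ℝ) - t) ≤ ((d:ℝ)-b)*U + b + (d:ℝ) := by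
      rcases le_or_gt n U with hnU | hnU
      · have hcn : cnt d b B n = c' := cnt_flat hb hbB hBd hv1 hnU
        rw [hcn] at hA
        have hmn : m < n := by
          have h7 : t * m < t * n := by linarith only [hA, hm1]
          have h8 := (mul_lt_mul_iff_right₀ ht0).1 h7
          exact_mod_cast h8
        refine ⟨by omega, ?_⟩
        have hnU' : (n:ℝ) ≤ (U:ℝ) := by exact_mod_cast hnU
        have p1 : (n:ℝ) * ((d:ℝ)-t) ≤ (U:ℝ) * ((d:ℝ)-t) :=
          mul_le_mul_of_nonneg_right hnU' (le_of_lt hdt)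
        have p2 : (U:ℝ) * ((d:ℝ)-t) ≤ (U:ℝ) * ((d:ℝ)-b) :=
          mul_le_mul_of_nonneg_left (by linarith only [ht]) hU0
        have p3 : (0:ℝ) ≤ b + (d:ℝ) := by positivity
        nlinarith only [p1, p2, p3]
      · have hcn : cnt d b B n = c' + (n - U) :=
          cnt_rise hb hbB hBd (le_of_lt hnU) (le_of_lt hv2)
        have hcnR : ((cnt d b B n : ℕ) : ℝ) = (c' : ℝ) + ((n:ℝ) - (U:ℝ)) := by
          rw [hcn]
          push_cast [Nat.cast_sub (le_of_lt hnU)]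
          ring
        rw [hcnR] at hA
        have hUn : (U:ℝ) < (n:ℝ) := by exact_mod_cast hnU
        have hmn : m < n := by
          have hbU : b * U < t * U := (mul_lt_mul_iff_left₀ hU0').2 ht
          have h7 : t * m < t * n := by
            have h8 : t * (U:ℝ) ≤ t * (n:ℝ) :=
              mul_le_mul_of_nonneg_left hUn.le (le_of_lt ht0)
            linarith only [hm1, hI1', hbU, h8, hd0]
          have h8 := (mul_lt_mul_iff_right₀ ht0).1 h7
          exact_mod_cast h8
        exact ⟨by omega, by nlinarith only [hA, hI2'']⟩
    obtain ⟨hmn, hnbar⟩ := hkey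
    refine ⟨m, hm0, hmn, ?_, hfinal⟩
    by_cases hPε : Pc d b t - ε ≤ 0
    · have h1 : (Pc d b t - ε) * n ≤ 0 := mul_nonpos_of_nonpos_of_nonneg hPε hn0
      have h2 : (0:ℝ) ≤ (m:ℝ) := by positivity
      linarith only [h1, h2]
    · push_neg at hPε
      have hnW : (n:ℝ) ≤ (((d:ℝ)-b)*U + b + (d:ℝ))/((d:ℝ)-t) := by
        rw [le_div_iff₀ hdt]; linarith only [hnbar]
      have h1 : (Pc d b t - ε) * n
          ≤ (Pc d b t - ε) * ((((d:ℝ)-b)*U + b + (d:ℝ))/((d:ℝ)-t)) :=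
        mul_le_mul_of_nonneg_left hnW (le_of_lt hPε)
      have hPcval : Pc d b t = b*((d:ℝ)-t)/(t*((d:ℝ)-b)) := by
        rw [eq_div_iff (ne_of_gt (by positivity : (0:ℝ) < t*((d:ℝ)-b)))]
        exact Pc_id hb ht htd
      have hQW : Pc d b t * ((((d:ℝ)-b)*U + b + (d:ℝ))/((d:ℝ)-t))
          = b*U/t + b*(b+(d:ℝ))/(t*((d:ℝ)-b)) := by
        rw [hPcval]
        field_simp
        ring
      have hWU : (U:ℝ) ≤ (((d:ℝ)-b)*U + b + (d:ℝ))/((d:ℝ)-t) := by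
        rw [le_div_iff₀ hdt]
        have p2 : (U:ℝ) * ((d:ℝ)-t) ≤ (U:ℝ) * ((d:ℝ)-b) :=
          mul_le_mul_of_nonneg_left (by linarith only [ht]) hU0
        nlinarith only [p2, hd0, hb]
      have h3 : ε*U ≤ ε * ((((d:ℝ)-b)*U + b + (d:ℝ))/((d:ℝ)-t)) :=
        mul_le_mul_of_nonneg_left hWU (le_of_lt hε)
      have hUN2' : (N2:ℝ) ≤ (U:ℝ) := by exact_mod_cast hUN2
      have h4 : C9 ≤ ε*U := by
        have h5 := mul_le_mul_of_nonneg_left hUN2' (le_of_lt hε)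
        linarith only [h5, hN2']
      have hmlow : b*(U:ℝ) - b - (d:ℝ) - t ≤ t * m := by
        have h := Nat.lt_floor_add_one (((d:ℝ) * c' - (d:ℝ))/t)
        rw [div_lt_iff₀ ht0] at h
        rw [hmdef]
        nlinarith only [h, hI2'', ht0]
      have hlast : b*(U:ℝ)/t - (b+(d:ℝ))/t - 1 ≤ (m:ℝ) := by
        have e : b*(U:ℝ)/t - (b+(d:ℝ))/t - 1 = (b*(U:ℝ) - (b+(d:ℝ)) - t)/t := by
          field_simp
        rw [e, div_le_iff₀ ht0]
        linarith only [hmlow]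
      have hexp : (Pc d b t - ε) * ((((d:ℝ)-b)*U + b + (d:ℝ))/((d:ℝ)-t))
          = Pc d b t * ((((d:ℝ)-b)*U + b + (d:ℝ))/((d:ℝ)-t))
            - ε * ((((d:ℝ)-b)*U + b + (d:ℝ))/((d:ℝ)-t)) := by ring
      rw [hC9] at h4
      linarith only [h1, hexp, hQW, h3, h4, hlast]

set_option maxHeartbeats 1000000 in
include hb hbB hBd in
lemma CL2 {t ε : ℝ} (ht : b < t) (htB : t < B) (hε : 0 < ε)
    (hPε : Pc d b t + ε ≤ 1) (K : ℕ) :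
    ∃ n : ℕ, K ≤ n ∧ 1 ≤ n ∧ ∀ m : ℕ, (Pc d b t + ε) * n ≤ m → (m:ℝ) ≤ (n:ℝ) + d + 1 →
      (d:ℝ) * cnt d b B m < t * m - t*((d:ℝ)+1) := by
  have ht0 : 0 < t := lt_trans hb ht
  have htd : t < (d:ℝ) := lt_of_lt_of_le htB hBd
  have hdt : (0:ℝ) < (d:ℝ) - t := by linarith
  have hdb : (0:ℝ) < (d:ℝ) - b := by linarith
  have hd0 : (0:ℝ) < (d:ℝ) := by linarith
  have hE'0 : 0 < t*((d:ℝ)+1) := by positivity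
  set Q : ℝ := Pc d b t + ε with hQ
  have hPcpos := Pc_pos (d := d) hb ht htd
  have hQ0 : 0 < Q := by rw [hQ]; linarith
  have htQ : 0 < t * Q := mul_pos ht0 hQ0
  have hQid : t*Q*((d:ℝ)-b) = b*((d:ℝ)-t) + ε*t*((d:ℝ)-b) := by
    have h0 := Pc_id (d := d) hb ht htd
    rw [hQ]
    linarith [h0]
  obtain ⟨k₁, hk₁⟩ := Bk_eventually_ge hbB htB
  set C10 : ℝ := t*Q*(t*((d:ℝ)+1)) + ((d:ℝ)-t)*(t*((d:ℝ)+1))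
      + ((d:ℝ)-t)*t*Q*((d:ℝ)+2) + 1 with hC10
  have hden : (0:ℝ) < ε*t*((d:ℝ)-b) := by positivity
  obtain ⟨N3, hN3⟩ := exists_nat_ge (C10/(ε*t*((d:ℝ)-b)))
  have hN3' : C10 ≤ ε*t*((d:ℝ)-b) * N3 := by
    rw [div_le_iff₀ hden] at hN3; linarith
  obtain ⟨N4, hN4⟩ := exists_nat_ge (t*(K:ℝ)/b)
  have hN4' : t*(K:ℝ) ≤ b * N4 := by
    rw [div_le_iff₀ hb] at hN4; linarith
  set k : ℕ := max k₁ (max N3 N4) with hk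
  have hk1 : k₁ ≤ k := le_max_left _ _
  have hkN3 : N3 ≤ k := le_trans (le_max_left _ _) (le_max_right _ _)
  have hkN4 : N4 ≤ k := le_trans (le_max_right _ _) (le_max_right _ _)
  set V : ℕ := vseq d b B k with hVdef
  set U : ℕ := useq d b B (k+1) with hUdef
  set c' : ℕ := cseq d b B (k+1) with hc'def
  set V' : ℕ := vseq d b B (k+1) with hV'def
  have hsize : N3 ≤ U ∧ N4 ≤ U ∧ 1 ≤ U ∧ V < U ∧ U < V' := by
    have h1 := useq_ge hb hbB hBd (d := d) (B := B) (k+1)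
    have h2 := vseq_lt_useq_succ hb hbB hBd (d := d) (B := B) k
    have h3 := useq_lt_vseq hb hbB hBd (d := d) (B := B) (k+1)
    refine ⟨by omega, by omega, by omega, by omega, by omega⟩
  obtain ⟨hUN3, hUN4, hU1, hVU, hUV'⟩ := hsize
  have hUN3' : (N3:ℝ) ≤ (U:ℝ) := by exact_mod_cast hUN3
  have hUN4' : (N4:ℝ) ≤ (U:ℝ) := by exact_mod_cast hUN4
  have hU0 : (0:ℝ) ≤ (U:ℝ) := by positivity
  have hV0 : (0:ℝ) ≤ (V:ℝ) := by positivity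
  have hI1' : (d:ℝ) * c' ≤ b * U := I1 hb (k+1)
  have hI3V : Bk b B k * V ≤ (d:ℝ) * c' := I3 hb hbB hBd k
  have htV : t * V ≤ (d:ℝ) * c' := by
    have h1 : t ≤ Bk b B k := hk₁ k hk1
    have h2 := mul_le_mul_of_nonneg_right h1 hV0
    linarith
  have hrisecross : (d:ℝ)*U - (d:ℝ)*c' ≤ ((d:ℝ)-t)*V' := by
    have hI3' : Bk b B (k+1) * V' ≤ (d:ℝ) * cseq d b B (k+2) := I3 hb hbB hBd (k+1)
    have h1 : t ≤ Bk b B (k+1) := hk₁ (k+1) (by omega)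
    have hV'0 : (0:ℝ) ≤ (V':ℝ) := by positivity
    have hcc : ((cseq d b B (k+2) : ℕ) : ℝ) = (c' : ℝ) + ((V':ℝ) - (U:ℝ)) := by
      rw [cseq_succ d b B (k+1)]
      have hvv : (V' : ℝ) = (U:ℝ) + (Lk d b B (k+1) : ℝ) := by
        rw [hV'def, hUdef]
        unfold vseq
        push_cast
        ring
      push_cast
      linarith [hvv]
    have h2 : t * V' ≤ (d:ℝ) * cseq d b B (k+2) := by
      have h3 := mul_le_mul_of_nonneg_right h1 hV'0
      linarith
    rw [hcc] at h2
    linarith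
  set n : ℕ := ⌊(b*(U:ℝ) + t*((d:ℝ)+1))/(t*Q)⌋₊ + 1 with hn
  have hnum0 : (0:ℝ) ≤ (b*(U:ℝ) + t*((d:ℝ)+1))/(t*Q) := by positivity
  have hncast : (n:ℝ) = ((⌊(b*(U:ℝ) + t*((d:ℝ)+1))/(t*Q)⌋₊ : ℕ) : ℝ) + 1 := by
    rw [hn]; push_cast; ring
  have key1 : b*(U:ℝ) + t*((d:ℝ)+1) < t*Q*(n:ℝ) := by
    have h := Nat.lt_floor_add_one ((b*(U:ℝ) + t*((d:ℝ)+1))/(t*Q))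
    rw [div_lt_iff₀ htQ] at h
    rw [hncast]
    linarith
  have key2 : t*Q*(n:ℝ) ≤ b*(U:ℝ) + t*((d:ℝ)+1) + t*Q := by
    have h := Nat.floor_le hnum0
    rw [le_div_iff₀ htQ] at h
    rw [hncast]
    linarith
  have hQle1 : Q ≤ 1 := hPε
  have hnK : K ≤ n := by
    have hbU : b*(N4:ℝ) ≤ b*(U:ℝ) := mul_le_mul_of_nonneg_left hUN4' hb.le
    have hn0' : (0:ℝ) ≤ (n:ℝ) := by positivity
    have hq1 : t*Q ≤ t := by
      have hh := mul_le_mul_of_nonneg_left hQle1 ht0.le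
      linarith only [hh]
    have h2 : t*Q*(n:ℝ) ≤ t*(n:ℝ) := mul_le_mul_of_nonneg_right hq1 hn0'
    have h3 : t*(K:ℝ) < t*(n:ℝ) := by linarith
    have h4 := (mul_lt_mul_iff_right₀ ht0).1 h3
    exact_mod_cast h4.le
  have hn1 : 1 ≤ n := by rw [hn]; omega
  refine ⟨n, hnK, hn1, ?_⟩
  intro m hm1 hm2
  have htm : t*Q*(n:ℝ) ≤ t*(m:ℝ) := by
    have h := mul_le_mul_of_nonneg_left hm1 (le_of_lt ht0)
    linarith only [h]
  have hmgt : b*(U:ℝ) + t*((d:ℝ)+1) < t*(m:ℝ) := lt_of_lt_of_le key1 htm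
  have hmV : V < m := by
    have h1 : t*(V:ℝ) < t*(m:ℝ) := by linarith
    have h2 := (mul_lt_mul_iff_right₀ ht0).1 h1
    exact_mod_cast h2
  rcases le_or_gt m U with hmU | hmU
  · have hcn : cnt d b B m = c' := cnt_flat hb hbB hBd (by omega) hmU
    rw [hcn]
    linarith
  · have a1 : t*Q*(m:ℝ) ≤ b*(U:ℝ) + t*((d:ℝ)+1) + t*Q*((d:ℝ)+2) := by
      have h := mul_le_mul_of_nonneg_left hm2 (le_of_lt htQ)
      linarith only [h, key2]
    have a2 : ((d:ℝ)-t)*(t*Q*(m:ℝ)) ≤ ((d:ℝ)-t)*(b*(U:ℝ) + t*((d:ℝ)+1) + t*Q*((d:ℝ)+2)) :=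
      mul_le_mul_of_nonneg_left a1 (le_of_lt hdt)
    have c3 : C10 ≤ ε*t*((d:ℝ)-b)*(U:ℝ) := by
      have h := mul_le_mul_of_nonneg_left hUN3' (le_of_lt hden)
      linarith
    have hQidU : t*Q*((d:ℝ)-b)*(U:ℝ) = (b*((d:ℝ)-t) + ε*t*((d:ℝ)-b))*(U:ℝ) := by
      rw [hQid]
    have h2 : t*Q*(((d:ℝ)-t)*(m:ℝ)) < t*Q*(((d:ℝ)-b)*(U:ℝ) - t*((d:ℝ)+1)) := by
      rw [hC10] at c3
      linarith only [a2, c3, hQidU]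
    have hdm : ((d:ℝ)-t)*(m:ℝ) < ((d:ℝ)-b)*(U:ℝ) - t*((d:ℝ)+1) := (mul_lt_mul_iff_right₀ htQ).1 h2
    have hdbU : ((d:ℝ)-b)*(U:ℝ) ≤ (d:ℝ)*(U:ℝ) - (d:ℝ)*c' := by linarith only [hI1']
    have hmV' : m < V' := by
      have h3 : ((d:ℝ)-t)*(m:ℝ) < ((d:ℝ)-t)*(V':ℝ) := by linarith only [hdm, hdbU, hrisecross, hE'0]
      have h4 := (mul_lt_mul_iff_right₀ hdt).1 h3
      exact_mod_cast h4
    have hcn : cnt d b B m = c' + (m - U) :=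
      cnt_rise hb hbB hBd (le_of_lt hmU) (le_of_lt hmV')
    have hcnR : ((cnt d b B m : ℕ) : ℝ) = (c' : ℝ) + ((m:ℝ) - (U:ℝ)) := by
      rw [hcn]
      push_cast [Nat.cast_sub (le_of_lt hmU)]
      ring
    rw [hcnR]
    linarith only [hdm, hdbU]

end cl

section geom
variable (d : ℕ) (b B : ℝ)

/-- digit weight -/
def wdig (a : ℕ → Bool) (j : ℕ) : ℝ :=
  if Sp d b B j ∧ a j = true then ((2:ℝ)⁻¹)^(j+1) else 0

lemma wdig_nonneg (a : ℕ → Bool) (j : ℕ) : 0 ≤ wdig d b B a j := by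
  unfold wdig; split
  · positivity
  · exact le_refl 0

lemma wdig_le (a : ℕ → Bool) (j : ℕ) : wdig d b B a j ≤ ((2:ℝ)⁻¹)^(j+1) := by
  unfold wdig; split
  · exact le_refl _
  · positivity

lemma summable_pow_half : Summable (fun j : ℕ => ((2:ℝ)⁻¹)^(j+1)) := by
  have h := summable_geometric_of_lt_one (by norm_num : (0:ℝ) ≤ 2⁻¹) (by norm_num)
  simpa [pow_succ] using h.mul_right 2⁻¹

lemma tsum_pow_half_from (M : ℕ) : ∑' (j:ℕ), ((2:ℝ)⁻¹)^(j + M + 1) = ((2:ℝ)⁻¹)^M := by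
  have h1 : ∀ j : ℕ, ((2:ℝ)⁻¹)^(j + M + 1) = ((2:ℝ)⁻¹)^(M+1) * ((2:ℝ)⁻¹)^j := by
    intro j; rw [← pow_add]; ring_nf
  rw [tsum_congr h1, tsum_mul_left,
    tsum_geometric_of_lt_one (by norm_num) (by norm_num)]
  have h2 : ((1:ℝ) - 2⁻¹)⁻¹ = 2 := by norm_num
  rw [h2, pow_succ]
  ring

lemma summable_wdig (a : ℕ → Bool) : Summable (wdig d b B a) :=
  Summable.of_nonneg_of_le (wdig_nonneg d b B a) (wdig_le d b B a) (summable_pow_half)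

/-- a point of the Cantor-type set, coded by its digits -/
def ptx (a : ℕ → Bool) : ℝ := ∑' j, wdig d b B a j

def CS : Set ℝ := Set.range (ptx d b B)

def CC : Set (EuclideanSpace ℝ (Fin d)) := {x | ∀ i, x i ∈ CS d b B}

lemma ptx_nonneg (a : ℕ → Bool) : 0 ≤ ptx d b B a :=
  tsum_nonneg (wdig_nonneg d b B a)

lemma ptx_le_one (a : ℕ → Bool) : ptx d b B a ≤ 1 := by
  have h1 : ptx d b B a ≤ ∑' j : ℕ, ((2:ℝ)⁻¹)^(j+1) :=
    Summable.tsum_le_tsum (wdig_le d b B a) (summable_wdig d b B a) summable_pow_half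
  have h2 : ∑' (j:ℕ), ((2:ℝ)⁻¹)^(j + 0 + 1) = ((2:ℝ)⁻¹)^0 := tsum_pow_half_from 0
  simp only [Nat.add_zero, pow_zero] at h2
  linarith

lemma continuous_ptx : Continuous (ptx d b B) := by
  apply continuous_tsum _ summable_pow_half (fun j a => ?_)
  · intro j
    have h : (fun a : ℕ → Bool => wdig d b B a j)
        = (fun v : Bool => if Sp d b B j ∧ v = true then ((2:ℝ)⁻¹)^(j+1) else 0)
          ∘ (fun a : ℕ → Bool => a j) := by
      funext a; rfl
    rw [h]
    exact (continuous_of_discreteTopology).comp (continuous_apply j)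
  · rw [Real.norm_eq_abs, abs_of_nonneg (wdig_nonneg d b B a j)]
    exact wdig_le d b B a j

lemma isCompact_CS : IsCompact (CS d b B) := isCompact_range (continuous_ptx d b B)

lemma CS_subset_Icc : CS d b B ⊆ Set.Icc (0:ℝ) 1 := by
  rintro x ⟨a, rfl⟩
  exact ⟨ptx_nonneg d b B a, ptx_le_one d b B a⟩

lemma CC_subset_cube :
    CC d b B ⊆ {x : EuclideanSpace ℝ (Fin d) | ∀ i, x i ∈ Set.Icc (0:ℝ) 1} :=
  fun x hx i => CS_subset_Icc d b B (hx i)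

lemma CC_nonempty : (CC d b B).Nonempty :=
  ⟨WithLp.toLp 2 (fun _ => ptx d b B (fun _ => false)), fun _ => ⟨(fun _ => false), rfl⟩⟩

lemma isCompact_CC : IsCompact (CC d b B) := by
  apply Metric.isCompact_of_isClosed_isBounded
  · have h : CC d b B = ⋂ i, (fun x : EuclideanSpace ℝ (Fin d) => x i) ⁻¹' (CS d b B) := by
      ext x; simp [CC, Set.mem_iInter]
    rw [h]
    exact isClosed_iInter (fun i =>
      (isCompact_CS d b B).isClosed.preimage (PiLp.continuous_apply 2 _ i))
  · have hsub : CC d b B ⊆ Metric.closedBall (0 : EuclideanSpace ℝ (Fin d)) ((d:ℝ)+1) := by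
      intro x hx
      rw [Metric.mem_closedBall]
      have hde := EuclideanSpace.dist_eq x (0 : EuclideanSpace ℝ (Fin d))
      have hb1 : ∀ i, dist (x i) ((0 : EuclideanSpace ℝ (Fin d)) i)^2 ≤ 1 := by
        intro i
        have h1 := CS_subset_Icc d b B (hx i)
        have h0 : ((0 : EuclideanSpace ℝ (Fin d)) i) = 0 := rfl
        rw [h0, Real.dist_eq, sub_zero]
        obtain ⟨ha, hb'⟩ := h1
        rw [abs_of_nonneg ha]
        nlinarith
      have hsum : ∑ i, dist (x i) ((0 : EuclideanSpace ℝ (Fin d)) i)^2 ≤ (d:ℝ) := by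
        calc ∑ i, dist (x i) ((0 : EuclideanSpace ℝ (Fin d)) i)^2
            ≤ ∑ _i : Fin d, (1:ℝ) := Finset.sum_le_sum (fun i _ => hb1 i)
          _ = (d:ℝ) := by simp
      rw [hde]
      calc Real.sqrt (∑ i, dist (x i) ((0 : EuclideanSpace ℝ (Fin d)) i)^2)
          ≤ Real.sqrt ((d:ℝ)) := Real.sqrt_le_sqrt hsum
        _ ≤ Real.sqrt (((d:ℝ)+1)^2) := Real.sqrt_le_sqrt (by nlinarith [Nat.cast_nonneg (α := ℝ) d])
        _ = (d:ℝ)+1 := Real.sqrt_sq (by positivity)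
    exact (Metric.isBounded_closedBall).subset hsub

/-- the free positions below `M` -/
def Jset (M : ℕ) : Finset ℕ := (Finset.range M).filter (Sp d b B)

lemma card_Jset (M : ℕ) : (Jset d b B M).card = cnt d b B M := rfl

/-- extension of a choice of free digits to a full digit sequence -/
def extend (M : ℕ) (σ : {j // j ∈ Jset d b B M} → Bool) : ℕ → Bool :=
  fun j => if h : j ∈ Jset d b B M then σ ⟨j, h⟩ else false

/-- corner point associated with a choice of free digits below `M` -/
def corner (M : ℕ) (σ : {j // j ∈ Jset d b B M} → Bool) : ℝ :=
  ptx d b B (extend d b B M σ)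

lemma corner_mem_CS (M : ℕ) (σ : {j // j ∈ Jset d b B M} → Bool) :
    corner d b B M σ ∈ CS d b B := ⟨_, rfl⟩

lemma corner_eq_sum (M : ℕ) (σ : {j // j ∈ Jset d b B M} → Bool) :
    corner d b B M σ = ∑ j ∈ Jset d b B M, wdig d b B (extend d b B M σ) j := by
  unfold corner ptx
  apply tsum_eq_sum
  intro j hj
  unfold wdig extend
  rw [dif_neg hj]
  simp

lemma head_eq (M : ℕ) (a : ℕ → Bool) :
    ∑ j ∈ Finset.range M, wdig d b B a j
      = corner d b B M (fun j => a j.1) := by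
  rw [corner_eq_sum]
  rw [← Finset.sum_subset (Finset.filter_subset (Sp d b B) (Finset.range M))]
  · apply Finset.sum_congr rfl
    intro j hj
    unfold wdig extend
    rw [dif_pos (show j ∈ Jset d b B M from hj)]
  · intro j hj1 hj2
    unfold wdig
    rw [if_neg]
    rintro ⟨hS, -⟩
    exact hj2 (Finset.mem_filter.2 ⟨hj1, hS⟩)

lemma ptx_between (M : ℕ) (a : ℕ → Bool) :
    corner d b B M (fun j => a j.1) ≤ ptx d b B a ∧
    ptx d b B a ≤ corner d b B M (fun j => a j.1) + ((2:ℝ)⁻¹)^M := by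
  have hsum := Summable.sum_add_tsum_nat_add M (summable_wdig d b B a)
  have htail0 : 0 ≤ ∑' j, wdig d b B a (j + M) :=
    tsum_nonneg (fun j => wdig_nonneg d b B a (j + M))
  have htail1 : ∑' j, wdig d b B a (j + M) ≤ ((2:ℝ)⁻¹)^M := by
    have h1 : ∑' j, wdig d b B a (j + M) ≤ ∑' (j:ℕ), ((2:ℝ)⁻¹)^(j + M + 1) :=
      Summable.tsum_le_tsum (fun j => wdig_le d b B a (j + M))
        ((summable_nat_add_iff M).2 (summable_wdig d b B a))
        (by
          have h2 : Summable (fun j : ℕ => ((2:ℝ)⁻¹)^((j + M) + 1)) :=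
            (summable_nat_add_iff M).2 summable_pow_half
          exact h2)
    rw [tsum_pow_half_from M] at h1
    exact h1
  rw [head_eq] at hsum
  unfold ptx
  constructor
  · linarith [hsum, htail0]
  · linarith [hsum, htail1]

lemma geo_Ico (a M : ℕ) (h : a ≤ M) :
    ∑ j ∈ Finset.Ico a M, ((2:ℝ)⁻¹)^(j+1) = ((2:ℝ)⁻¹)^a - ((2:ℝ)⁻¹)^M := by
  induction M, h using Nat.le_induction with
  | base => simp
  | succ n hn ih =>
      rw [Finset.sum_Ico_succ_top hn, ih, pow_succ]
      ring

/-- separation of distinct corners -/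
lemma corner_sep (M : ℕ) (σ τ : {j // j ∈ Jset d b B M} → Bool) (hστ : σ ≠ τ) :
    ((2:ℝ)⁻¹)^M ≤ |corner d b B M σ - corner d b B M τ| := by
  classical
  set g : ℕ → ℝ := fun j =>
    wdig d b B (extend d b B M σ) j - wdig d b B (extend d b B M τ) j with hg
  set D : Finset ℕ := (Jset d b B M).filter
    (fun j => extend d b B M σ j ≠ extend d b B M τ j) with hD
  have hDne : D.Nonempty := by
    rw [Finset.nonempty_iff_ne_empty]
    intro hcon
    apply hστ
    funext j
    by_contra hja
    have hjD : (j : ℕ) ∈ D := by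
      rw [hD, Finset.mem_filter]
      refine ⟨j.2, ?_⟩
      unfold extend
      rw [dif_pos j.2, dif_pos j.2]
      intro he
      apply hja
      cases j
      exact he
    rw [hcon] at hjD
    exact absurd hjD (Finset.notMem_empty _)
  set j₀ : ℕ := D.min' hDne with hj₀
  have hj₀D : j₀ ∈ D := D.min'_mem hDne
  have hj₀J : j₀ ∈ Jset d b B M := (Finset.mem_filter.1 hj₀D).1
  have hj₀M : j₀ < M := Finset.mem_range.1 (Finset.mem_filter.1 hj₀J).1
  have hj₀S : Sp d b B j₀ := (Finset.mem_filter.1 hj₀J).2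
  have wval1 : ∀ (a : ℕ → Bool), a j₀ = true → wdig d b B a j₀ = ((2:ℝ)⁻¹)^(j₀+1) := by
    intro a ha; unfold wdig; rw [if_pos ⟨hj₀S, ha⟩]
  have wval0 : ∀ (a : ℕ → Bool), a j₀ = false → wdig d b B a j₀ = 0 := by
    intro a ha; unfold wdig
    rw [if_neg]
    rintro ⟨-, hc⟩
    rw [ha] at hc
    exact absurd hc (by simp)
  have hsubD : D ⊆ Jset d b B M := by rw [hD]; exact Finset.filter_subset _ _
  have hdiff : corner d b B M σ - corner d b B M τ = ∑ j ∈ D, g j := by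
    rw [corner_eq_sum, corner_eq_sum, ← Finset.sum_sub_distrib]
    refine (Finset.sum_subset hsubD ?_).symm
    intro j hj1 hj2
    rw [hD, Finset.mem_filter] at hj2
    push_neg at hj2
    have he : extend d b B M σ j = extend d b B M τ j := hj2 hj1
    unfold wdig
    rw [he]
    ring
  have hgj₀ : |g j₀| = ((2:ℝ)⁻¹)^(j₀+1) := by
    have hne : extend d b B M σ j₀ ≠ extend d b B M τ j₀ := (Finset.mem_filter.1 hj₀D).2
    rw [hg]
    simp only
    rcases Bool.eq_false_or_eq_true (extend d b B M σ j₀) with h1 | h1 <;>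
      rcases Bool.eq_false_or_eq_true (extend d b B M τ j₀) with h2 | h2
    · rw [wval1 _ h1, wval1 _ h2]; rw [h1, h2] at hne; exact absurd rfl hne
    · rw [wval1 _ h1, wval0 _ h2, sub_zero, abs_of_nonneg (by positivity)]
    · rw [wval0 _ h1, wval1 _ h2, zero_sub, abs_neg, abs_of_nonneg (by positivity)]
    · rw [h1, h2] at hne; exact absurd rfl hne
  have hrest : |∑ j ∈ D.erase j₀, g j| ≤ ((2:ℝ)⁻¹)^(j₀+1) - ((2:ℝ)⁻¹)^M := by
    calc |∑ j ∈ D.erase j₀, g j| ≤ ∑ j ∈ D.erase j₀, |g j| :=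
          Finset.abs_sum_le_sum_abs _ _
      _ ≤ ∑ j ∈ D.erase j₀, ((2:ℝ)⁻¹)^(j+1) := by
          apply Finset.sum_le_sum
          intro j hj
          rw [hg]
          simp only
          have h1 := wdig_nonneg d b B (extend d b B M σ) j
          have h2 := wdig_nonneg d b B (extend d b B M τ) j
          have h3 := wdig_le d b B (extend d b B M σ) j
          have h4 := wdig_le d b B (extend d b B M τ) j
          rw [abs_le]
          constructor <;> linarith
      _ ≤ ∑ j ∈ Finset.Ico (j₀+1) M, ((2:ℝ)⁻¹)^(j+1) := by
          apply Finset.sum_le_sum_of_subset_of_nonneg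
          · intro j hj
            have hjD := Finset.mem_of_mem_erase hj
            have hjne := Finset.ne_of_mem_erase hj
            have hjJ : j ∈ Jset d b B M := (Finset.mem_filter.1 hjD).1
            have hjM : j < M := Finset.mem_range.1 (Finset.mem_filter.1 hjJ).1
            have hjge : j₀ ≤ j := D.min'_le j hjD
            rw [Finset.mem_Ico]
            omega
          · intro j _ _
            positivity
      _ = ((2:ℝ)⁻¹)^(j₀+1) - ((2:ℝ)⁻¹)^M := geo_Ico (j₀+1) M (by omega)
  have hsplit : ∑ j ∈ D, g j = g j₀ + ∑ j ∈ D.erase j₀, g j :=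
    (Finset.add_sum_erase D g hj₀D).symm
  have htri : |g j₀| ≤ |g j₀ + ∑ j ∈ D.erase j₀, g j| + |∑ j ∈ D.erase j₀, g j| := by
    have h := abs_add_le (g j₀ + ∑ j ∈ D.erase j₀, g j) (-(∑ j ∈ D.erase j₀, g j))
    simp only [add_neg_cancel_right, abs_neg] at h
    exact h
  rw [hdiff, hsplit]
  rw [hgj₀] at htri
  linarith [htri, hrest]

end geom

section cover
variable (d : ℕ) (b B : ℝ)

lemma coord_dist_le (x y : EuclideanSpace ℝ (Fin d)) (i : Fin d) :
    dist (x i) (y i) ≤ dist x y := by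
  rw [EuclideanSpace.dist_eq]
  have h1 : dist (x i) (y i)^2 ≤ ∑ j, dist (x j) (y j)^2 :=
    Finset.single_le_sum (f := fun j => dist (x j) (y j)^2)
      (fun j _ => sq_nonneg _) (Finset.mem_univ i)
  calc dist (x i) (y i) = Real.sqrt (dist (x i) (y i)^2) := (Real.sqrt_sq dist_nonneg).symm
    _ ≤ _ := Real.sqrt_le_sqrt h1

lemma coverSet_mem {X : Type*} [MetricSpace X] (F : Set X) (δ : ℝ) {ι : Type*} [Fintype ι]
    (U : ι → Set X) (hdiam : ∀ i, EMetric.diam (U i) ≤ ENNReal.ofReal δ) (hcov : F ⊆ ⋃ i, U i) :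
    Fintype.card ι ∈ {n : ℕ | ∃ V : Fin n → Set X,
      (∀ i, EMetric.diam (V i) ≤ ENNReal.ofReal δ) ∧ F ⊆ ⋃ i, V i} := by
  refine ⟨fun i => U ((Fintype.equivFin ι).symm i), fun i => hdiam _, ?_⟩
  intro x hx
  obtain ⟨i, hi⟩ := Set.mem_iUnion.1 (hcov hx)
  exact Set.mem_iUnion.2 ⟨Fintype.equivFin ι i, by simpa using hi⟩

lemma coverN_le_card {X : Type*} [MetricSpace X] (F : Set X) (δ : ℝ) {ι : Type*} [Fintype ι]
    (U : ι → Set X) (hdiam : ∀ i, EMetric.diam (U i) ≤ ENNReal.ofReal δ) (hcov : F ⊆ ⋃ i, U i) :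
    coverN F δ ≤ Fintype.card ι :=
  Nat.sInf_le (coverSet_mem F δ U hdiam hcov)

lemma card_le_coverN {X : Type*} [MetricSpace X] (F : Set X) (δ r : ℝ) {ι : Type*} [Fintype ι]
    (y : ι → X) (hy : ∀ i, y i ∈ F) (hsep : ∀ i j, i ≠ j → r ≤ dist (y i) (y j))
    (hδ0 : 0 ≤ δ) (hδr : δ < r)
    (hne : {n : ℕ | ∃ U : Fin n → Set X,
      (∀ i, EMetric.diam (U i) ≤ ENNReal.ofReal δ) ∧ F ⊆ ⋃ i, U i}.Nonempty) :
    Fintype.card ι ≤ coverN F δ := by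
  classical
  obtain ⟨U, hdiam, hcov⟩ :
      ∃ U : Fin (coverN F δ) → Set X,
        (∀ i, EMetric.diam (U i) ≤ ENNReal.ofReal δ) ∧ F ⊆ ⋃ i, U i :=
    Nat.sInf_mem hne
  have hchoice : ∀ i : ι, ∃ k, y i ∈ U k := fun i => Set.mem_iUnion.1 (hcov (hy i))
  choose f hf using hchoice
  have hinj : Function.Injective f := by
    intro i j hij
    by_contra hne'
    have h1 : edist (y i) (y j) ≤ EMetric.diam (U (f i)) :=
      EMetric.edist_le_diam_of_mem (hf i) (hij ▸ hf j)
    have h2 : edist (y i) (y j) ≤ ENNReal.ofReal δ := le_trans h1 (hdiam _)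
    rw [edist_le_ofReal hδ0] at h2
    have h3 := hsep i j hne'
    linarith
  calc Fintype.card ι ≤ Fintype.card (Fin (coverN F δ)) := Fintype.card_le_of_injective f hinj
    _ = coverN F δ := Fintype.card_fin _

def cubeSet (M : ℕ) (σ : Fin d → ({j // j ∈ Jset d b B M} → Bool)) :
    Set (EuclideanSpace ℝ (Fin d)) :=
  {x | ∀ i, x i ∈ Set.Icc (corner d b B M (σ i)) (corner d b B M (σ i) + ((2:ℝ)⁻¹)^M)}

lemma cubeSet_diam (M : ℕ) (σ : Fin d → ({j // j ∈ Jset d b B M} → Bool)) :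
    EMetric.diam (cubeSet d b B M σ) ≤ ENNReal.ofReal (Real.sqrt d * ((2:ℝ)⁻¹)^M) := by
  apply EMetric.diam_le
  intro x hx y hy
  rw [edist_le_ofReal (by positivity)]
  rw [EuclideanSpace.dist_eq]
  have hcoord : ∀ i, dist (x i) (y i) ≤ ((2:ℝ)⁻¹)^M := by
    intro i
    obtain ⟨h1, h2⟩ := hx i
    obtain ⟨h3, h4⟩ := hy i
    rw [Real.dist_eq, abs_le]
    constructor <;> linarith
  calc Real.sqrt (∑ i, dist (x i) (y i)^2)
      ≤ Real.sqrt (∑ _i : Fin d, (((2:ℝ)⁻¹)^M)^2) := by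
        apply Real.sqrt_le_sqrt
        apply Finset.sum_le_sum
        intro i _
        have h5 := hcoord i
        nlinarith [dist_nonneg (x := x i) (y := y i)]
    _ = Real.sqrt ((d:ℝ) * (((2:ℝ)⁻¹)^M)^2) := by
        rw [Finset.sum_const]
        simp [nsmul_eq_mul]
    _ = Real.sqrt (d:ℝ) * ((2:ℝ)⁻¹)^M := by
        rw [Real.sqrt_mul (by positivity), Real.sqrt_sq (by positivity)]

lemma cubeSet_cover (M : ℕ) : CC d b B ⊆ ⋃ σ, cubeSet d b B M σ := by
  intro x hx
  have h : ∀ i, ∃ a : ℕ → Bool, ptx d b B a = x i := fun i => hx i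
  choose a ha using h
  refine Set.mem_iUnion.2 ⟨fun i => fun j => a i j.1, fun i => ?_⟩
  obtain ⟨h1, h2⟩ := ptx_between d b B M (a i)
  rw [ha i] at h1 h2
  exact ⟨h1, h2⟩

lemma card_index (M : ℕ) :
    Fintype.card (Fin d → ({j // j ∈ Jset d b B M} → Bool)) = 2^(d * cnt d b B M) := by
  classical
  rw [Fintype.card_fun, Fintype.card_fun, Fintype.card_coe, card_Jset, Fintype.card_bool,
    Fintype.card_fin, ← pow_mul, Nat.mul_comm]

lemma coverN_CC_le (M : ℕ) (δ : ℝ) (hδ : Real.sqrt d * ((2:ℝ)⁻¹)^M ≤ δ) :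
    coverN (CC d b B) δ ≤ 2^(d * cnt d b B M) := by
  have h := coverN_le_card (CC d b B) δ (cubeSet d b B M)
    (fun σ => le_trans (cubeSet_diam d b B M σ) (ENNReal.ofReal_le_ofReal hδ))
    (cubeSet_cover d b B M)
  rwa [card_index] at h

lemma coverSet_nonempty (δ : ℝ) (hδ0 : 0 < δ) :
    {n : ℕ | ∃ U : Fin n → Set (EuclideanSpace ℝ (Fin d)),
      (∀ i, EMetric.diam (U i) ≤ ENNReal.ofReal δ) ∧ CC d b B ⊆ ⋃ i, U i}.Nonempty := by
  have hsd : (0:ℝ) < Real.sqrt d + 1 := by positivity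
  obtain ⟨M', hM'⟩ := exists_pow_lt_of_lt_one (div_pos hδ0 hsd) (by norm_num : (2:ℝ)⁻¹ < 1)
  have hδ' : Real.sqrt d * ((2:ℝ)⁻¹)^M' ≤ δ := by
    rw [lt_div_iff₀ hsd] at hM'
    have h1 : Real.sqrt d * ((2:ℝ)⁻¹)^M' ≤ (Real.sqrt d + 1) * ((2:ℝ)⁻¹)^M' := by
      have h2 : (0:ℝ) ≤ ((2:ℝ)⁻¹)^M' := by positivity
      nlinarith
    nlinarith [hM']
  exact ⟨_, coverSet_mem (CC d b B) δ (cubeSet d b B M')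
    (fun σ => le_trans (cubeSet_diam d b B M' σ) (ENNReal.ofReal_le_ofReal hδ'))
    (cubeSet_cover d b B M')⟩

def ptsP (M : ℕ) (σ : Fin d → ({j // j ∈ Jset d b B M} → Bool)) :
    EuclideanSpace ℝ (Fin d) :=
  WithLp.toLp 2 (fun i => corner d b B M (σ i))

lemma ptsP_mem (M : ℕ) (σ : Fin d → ({j // j ∈ Jset d b B M} → Bool)) :
    ptsP d b B M σ ∈ CC d b B := fun i => corner_mem_CS d b B M (σ i)

lemma ptsP_sep (M : ℕ) (σ τ : Fin d → ({j // j ∈ Jset d b B M} → Bool)) (h : σ ≠ τ) :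
    ((2:ℝ)⁻¹)^M ≤ dist (ptsP d b B M σ) (ptsP d b B M τ) := by
  have hi : ∃ i, σ i ≠ τ i := by
    by_contra hcon
    push_neg at hcon
    exact h (funext hcon)
  obtain ⟨i, hi⟩ := hi
  calc ((2:ℝ)⁻¹)^M ≤ |corner d b B M (σ i) - corner d b B M (τ i)| :=
        corner_sep d b B M (σ i) (τ i) hi
    _ = dist (ptsP d b B M σ i) (ptsP d b B M τ i) := (Real.dist_eq _ _).symm
    _ ≤ dist (ptsP d b B M σ) (ptsP d b B M τ) := coord_dist_le d _ _ i

lemma le_coverN_CC (M : ℕ) (δ : ℝ) (hδ0 : 0 < δ) (hδ : δ < ((2:ℝ)⁻¹)^M) :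
    2^(d * cnt d b B M) ≤ coverN (CC d b B) δ := by
  have h := card_le_coverN (CC d b B) δ (((2:ℝ)⁻¹)^M) (ptsP d b B M)
    (ptsP_mem d b B M) (fun σ τ hστ => ptsP_sep d b B M σ τ hστ)
    (le_of_lt hδ0) hδ (coverSet_nonempty d b B δ hδ0)
  rwa [card_index] at h

lemma one_le_coverN (δ : ℝ) (hδ0 : 0 < δ) : 1 ≤ coverN (CC d b B) δ := by
  have h := card_le_coverN (CC d b B) δ (δ + 1) (fun _ : Unit => (CC_nonempty d b B).choose)
    (fun _ => (CC_nonempty d b B).choose_spec)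
    (fun i j hij => absurd rfl hij)
    (le_of_lt hδ0) (by linarith) (coverSet_nonempty d b B δ hδ0)
  simpa using h

end cover

section analytic
variable {d : ℕ} {b B : ℝ}

lemma log2_pos : (0:ℝ) < Real.log 2 := Real.log_pos (by norm_num)

lemma log_pow_half (M : ℕ) : Real.log (((2:ℝ)⁻¹)^M) = -((M:ℝ) * Real.log 2) := by
  rw [Real.log_pow, Real.log_inv]
  push_cast
  ring

lemma pow_half_eq_exp (M : ℕ) : ((2:ℝ)⁻¹)^M = Real.exp (-((M:ℝ) * Real.log 2)) := by
  rw [← log_pow_half, Real.exp_log (by positivity)]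

lemma delta_lt_pow_iff {δ : ℝ} (hδ0 : 0 < δ) (M : ℕ) :
    δ < ((2:ℝ)⁻¹)^M ↔ (M:ℝ) * Real.log 2 < -Real.log δ := by
  have hp : (0:ℝ) < ((2:ℝ)⁻¹)^M := by positivity
  constructor
  · intro h
    have h1 := Real.log_lt_log hδ0 h
    rw [log_pow_half] at h1
    linarith
  · intro h
    have h2 : Real.log δ < Real.log (((2:ℝ)⁻¹)^M) := by rw [log_pow_half]; linarith
    have h3 := Real.exp_lt_exp.2 h2
    rwa [Real.exp_log hδ0, Real.exp_log hp] at h3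

lemma pow_le_delta_iff {δ : ℝ} (hδ0 : 0 < δ) (M : ℕ) :
    ((2:ℝ)⁻¹)^M ≤ δ ↔ -Real.log δ ≤ (M:ℝ) * Real.log 2 := by
  have hp : (0:ℝ) < ((2:ℝ)⁻¹)^M := by positivity
  constructor
  · intro h
    have h1 := Real.log_le_log hp h
    rw [log_pow_half] at h1
    linarith
  · intro h
    have h2 : Real.log (((2:ℝ)⁻¹)^M) ≤ Real.log δ := by rw [log_pow_half]; linarith
    have h3 := Real.exp_le_exp.2 h2
    rwa [Real.exp_log hδ0, Real.exp_log hp] at h3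

lemma sqrtd_mul_pow_le_one : Real.sqrt d * ((2:ℝ)⁻¹)^d ≤ 1 := by
  have h1 : Real.sqrt d ≤ (d:ℝ) + 1 := by
    calc Real.sqrt d ≤ Real.sqrt (((d:ℝ)+1)^2) :=
          Real.sqrt_le_sqrt (by nlinarith [Nat.cast_nonneg (α := ℝ) d])
      _ = (d:ℝ)+1 := Real.sqrt_sq (by positivity)
  have h2 : ((d:ℝ) + 1) ≤ (2:ℝ)^d := by
    have h0 := Nat.lt_two_pow_self (n := d)
    have h3 : ((d:ℕ):ℝ) + 1 ≤ ((2^d : ℕ):ℝ) := by exact_mod_cast h0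
    push_cast at h3
    exact h3
  have h4 : (0:ℝ) < (2:ℝ)^d := by positivity
  have h5 : ((2:ℝ)⁻¹)^d = ((2:ℝ)^d)⁻¹ := by rw [inv_pow]
  rw [h5]
  calc Real.sqrt d * ((2:ℝ)^d)⁻¹ ≤ (2:ℝ)^d * ((2:ℝ)^d)⁻¹ := by
        apply mul_le_mul_of_nonneg_right (le_trans h1 h2) (by positivity)
    _ = 1 := mul_inv_cancel₀ (ne_of_gt h4)

/-- `√d · 2^{-(M+d)} ≤ 2^{-M}` -/
lemma sqrtd_mul_pow_le (M : ℕ) : Real.sqrt d * ((2:ℝ)⁻¹)^(M + d) ≤ ((2:ℝ)⁻¹)^M := by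
  rw [pow_add]
  calc Real.sqrt d * (((2:ℝ)⁻¹)^M * ((2:ℝ)⁻¹)^d)
      = (Real.sqrt d * ((2:ℝ)⁻¹)^d) * ((2:ℝ)⁻¹)^M := by ring
    _ ≤ 1 * ((2:ℝ)⁻¹)^M := by
        apply mul_le_mul_of_nonneg_right sqrtd_mul_pow_le_one (by positivity)
    _ = ((2:ℝ)⁻¹)^M := one_mul _

variable (hb : 0 < b) (hbB : b < B) (hBd : B ≤ (d : ℝ))

include hb hbB hBd in
lemma le_logN {δ : ℝ} (hδ0 : 0 < δ) (M : ℕ) (h : δ < ((2:ℝ)⁻¹)^M) :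
    ((d:ℝ) * cnt d b B M) * Real.log 2 ≤ Real.log (coverN (CC d b B) δ) := by
  have hN := le_coverN_CC d b B M δ hδ0 h
  have hNcast : ((2:ℝ))^(d * cnt d b B M) ≤ ((coverN (CC d b B) δ : ℕ) : ℝ) := by
    have h1 := (Nat.cast_le (α := ℝ)).2 hN
    push_cast at h1
    exact h1
  have hlog := Real.log_le_log (by positivity) hNcast
  rw [Real.log_pow] at hlog
  push_cast at hlog
  linarith

include hb hbB hBd in
lemma logN_le {δ : ℝ} (hδ0 : 0 < δ) (M : ℕ) (h : Real.sqrt d * ((2:ℝ)⁻¹)^M ≤ δ) :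
    Real.log (coverN (CC d b B) δ) ≤ ((d:ℝ) * cnt d b B M) * Real.log 2 := by
  have hN := coverN_CC_le d b B M δ h
  have hNpos : (0:ℝ) < ((coverN (CC d b B) δ : ℕ) : ℝ) := by
    have h1 := one_le_coverN d b B δ hδ0
    exact_mod_cast Nat.lt_of_lt_of_le Nat.zero_lt_one h1
  have hNcast : ((coverN (CC d b B) δ : ℕ) : ℝ) ≤ ((2:ℝ))^(d * cnt d b B M) := by
    have h1 := (Nat.cast_le (α := ℝ)).2 hN
    push_cast at h1
    exact h1
  have hlog := Real.log_le_log hNpos hNcast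
  rw [Real.log_pow] at hlog
  push_cast at hlog
  linarith

/-- eventual statements in the punctured neighbourhood filter -/
lemma eventually_nhdsGT {δ₀ : ℝ} (hδ₀ : 0 < δ₀) {P : ℝ → Prop}
    (h : ∀ δ : ℝ, 0 < δ → δ < δ₀ → P δ) : ∀ᶠ δ in 𝓝[>] (0:ℝ), P δ := by
  have hmem : Set.Ioo (0:ℝ) δ₀ ∈ 𝓝[>] (0:ℝ) :=
    Ioo_mem_nhdsGT_of_mem ⟨le_refl 0, hδ₀⟩
  filter_upwards [hmem] with δ hδ
  exact h δ hδ.1 hδ.2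

lemma tendsto_pow_half_seq (e : ℕ → ℕ) (he : ∀ k, k ≤ e k) :
    Filter.Tendsto (fun k => ((2:ℝ)⁻¹)^(e k)) Filter.atTop (𝓝[>] (0:ℝ)) := by
  rw [tendsto_nhdsWithin_iff]
  constructor
  · have h1 : ∀ k : ℕ, ((2:ℝ)⁻¹)^(e k) ≤ ((2:ℝ)⁻¹)^k :=
      fun k => pow_le_pow_of_le_one (by norm_num) (by norm_num) (he k)
    exact squeeze_zero (fun k => by positivity) h1
      (tendsto_pow_atTop_nhds_zero_of_lt_one (by norm_num) (by norm_num))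
  · filter_upwards with k
    have h2 : (0:ℝ) < ((2:ℝ)⁻¹)^(e k) := by positivity
    exact h2

lemma frequently_nhdsGT (e : ℕ → ℕ) (he : ∀ k, k ≤ e k) {P : ℝ → Prop}
    (h : ∃ᶠ k in Filter.atTop, P (((2:ℝ)⁻¹)^(e k))) : ∃ᶠ δ in 𝓝[>] (0:ℝ), P δ :=
  (tendsto_pow_half_seq e he).frequently h

/-- characterization of liminf in our setting -/
lemma real_liminf_eq {f : ℝ → ℝ} {L : ℝ}
    (hev : ∀ ε : ℝ, 0 < ε → ∀ᶠ δ in 𝓝[>] (0:ℝ), L - ε ≤ f δ)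
    (hfr : ∀ ε : ℝ, 0 < ε → ∃ᶠ δ in 𝓝[>] (0:ℝ), f δ ≤ L + ε)
    (hlb : ∀ᶠ δ in 𝓝[>] (0:ℝ), 0 ≤ f δ)
    (hub : ∃ c : ℝ, ∀ᶠ δ in 𝓝[>] (0:ℝ), f δ ≤ c) :
    Filter.liminf f (𝓝[>] (0:ℝ)) = L := by
  have hbdd : Filter.IsBoundedUnder (· ≥ ·) (𝓝[>] (0:ℝ)) f := ⟨0, by simpa using hlb⟩
  obtain ⟨c, hc⟩ := hub
  have hcob : Filter.IsCoboundedUnder (· ≥ ·) (𝓝[>] (0:ℝ)) f :=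
    Filter.IsBoundedUnder.isCoboundedUnder_ge ⟨c, by simpa using hc⟩
  apply le_antisymm
  · apply le_of_forall_pos_le_add
    intro ε hε
    exact Filter.liminf_le_of_frequently_le (hfr ε hε) hbdd
  · apply le_of_forall_pos_le_add
    intro ε hε
    have h1 := Filter.le_liminf_of_le hcob (hev ε hε)
    linarith

lemma real_limsup_eq {f : ℝ → ℝ} {L : ℝ}
    (hev : ∀ ε : ℝ, 0 < ε → ∀ᶠ δ in 𝓝[>] (0:ℝ), f δ ≤ L + ε)
    (hfr : ∀ ε : ℝ, 0 < ε → ∃ᶠ δ in 𝓝[>] (0:ℝ), L - ε ≤ f δ)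
    (hlb : ∀ᶠ δ in 𝓝[>] (0:ℝ), 0 ≤ f δ)
    (hub : ∃ c : ℝ, ∀ᶠ δ in 𝓝[>] (0:ℝ), f δ ≤ c) :
    Filter.limsup f (𝓝[>] (0:ℝ)) = L := by
  obtain ⟨c, hc⟩ := hub
  have hbdd : Filter.IsBoundedUnder (· ≤ ·) (𝓝[>] (0:ℝ)) f := ⟨c, by simpa using hc⟩
  have hcob : Filter.IsCoboundedUnder (· ≤ ·) (𝓝[>] (0:ℝ)) f :=
    Filter.IsBoundedUnder.isCoboundedUnder_le ⟨0, by simpa using hlb⟩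
  apply le_antisymm
  · apply le_of_forall_pos_le_add
    intro ε hε
    have h1 := Filter.limsup_le_of_le hcob (hev ε hε)
    linarith
  · apply le_of_forall_pos_le_add
    intro ε hε
    have h1 := Filter.le_limsup_of_frequently_le (hfr ε hε) hbdd
    linarith

/-- the function whose liminf/limsup are the box dimensions -/
noncomputable def gfun (d : ℕ) (b B : ℝ) (δ : ℝ) : ℝ :=
  Real.log (coverN (CC d b B) δ) / (-Real.log δ)

include hb hbB hBd in
lemma gfun_nonneg {δ : ℝ} (hδ0 : 0 < δ) (hδ1 : δ < 1) : 0 ≤ gfun d b B δ := by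
  unfold gfun
  have hL : 0 < -Real.log δ := by
    have := Real.log_neg hδ0 hδ1
    linarith
  apply div_nonneg _ (le_of_lt hL)
  have h1 := one_le_coverN d b B δ hδ0
  have h2 : (1:ℝ) ≤ ((coverN (CC d b B) δ : ℕ) : ℝ) := by exact_mod_cast h1
  exact Real.log_nonneg h2

include hb hbB hBd in
lemma gfun_ev_le (ε : ℝ) (hε : 0 < ε) :
    ∀ᶠ δ in 𝓝[>] (0:ℝ), gfun d b B δ ≤ B + ε := by
  have hd0 : (0:ℝ) < d := by linarith
  have hB0 : (0:ℝ) < B := by linarith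
  set C : ℝ := B*(1+(d:ℝ)) + (d:ℝ) with hC
  have hC0 : 0 < C := by rw [hC]; positivity
  set x₀ : ℝ := C/ε + 1 with hx₀
  have hx₀0 : 0 < x₀ := by positivity
  apply eventually_nhdsGT (show (0:ℝ) < min 2⁻¹ (Real.exp (-(x₀ * Real.log 2))) by positivity)
  intro δ hδ0 hδsm
  have hδ1 : δ < 1 := lt_of_lt_of_le (lt_of_lt_of_le hδsm (min_le_left _ _)) (by norm_num)
  have hL : 0 < -Real.log δ := by
    have := Real.log_neg hδ0 hδ1
    linarith
  set x : ℝ := -Real.log δ / Real.log 2 with hx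
  have hx0 : 0 < x := by rw [hx]; positivity
  have hxL : x * Real.log 2 = -Real.log δ := by
    rw [hx]; field_simp
  have hxbig : x₀ < x := by
    have h1 : δ < Real.exp (-(x₀ * Real.log 2)) :=
      lt_of_lt_of_le hδsm (min_le_right _ _)
    have h2 : Real.log δ < -(x₀ * Real.log 2) := by
      calc Real.log δ < Real.log (Real.exp (-(x₀ * Real.log 2))) :=
            Real.log_lt_log hδ0 h1
        _ = -(x₀ * Real.log 2) := Real.log_exp _
    have h3 : x₀ * Real.log 2 < x * Real.log 2 := by rw [hxL]; linarith
    exact lt_of_mul_lt_mul_right h3 (le_of_lt log2_pos)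
  set M : ℕ := ⌈x⌉₊ + d with hM
  have hMx : (⌈x⌉₊ : ℝ) < x + 1 := Nat.ceil_lt_add_one (le_of_lt hx0)
  have hMub : (M:ℝ) < x + 1 + d := by
    rw [hM]; push_cast; linarith
  have hcov : Real.sqrt d * ((2:ℝ)⁻¹)^M ≤ δ := by
    apply le_trans (sqrtd_mul_pow_le ⌈x⌉₊)
    rw [pow_le_delta_iff hδ0]
    rw [← hxL]
    have : x ≤ (⌈x⌉₊ : ℝ) := Nat.le_ceil x
    nlinarith [log2_pos]
  have hlogN := logN_le hb hbB hBd hδ0 M hcov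
  have hG2 := G2 hb hbB hBd (d := d) (b := b) (B := B) M
  unfold gfun
  rw [div_le_iff₀ hL, ← hxL]
  have h5 : ((d:ℝ) * cnt d b B M) * Real.log 2 ≤ (B * M + d) * Real.log 2 :=
    mul_le_mul_of_nonneg_right hG2 (le_of_lt log2_pos)
  have h6 : (B * (M:ℝ) + d) * Real.log 2 ≤ (B * (x + 1 + d) + d) * Real.log 2 := by
    apply mul_le_mul_of_nonneg_right _ (le_of_lt log2_pos)
    nlinarith [hMub, hB0]
  have h7 : (B * (x + 1 + (d:ℝ)) + d) * Real.log 2 ≤ (B + ε) * (x * Real.log 2) := by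
    have h8 : B * (x + 1 + (d:ℝ)) + d = B * x + C := by rw [hC]; ring
    rw [h8]
    have h9 : C ≤ ε * x := by
      have h10 : C = ε * (C/ε) := by field_simp
      rw [h10]
      apply mul_le_mul_of_nonneg_left _ (le_of_lt hε)
      rw [hx₀] at hxbig
      linarith
    nlinarith [log2_pos, h9]
  calc Real.log (coverN (CC d b B) δ) ≤ ((d:ℝ) * cnt d b B M) * Real.log 2 := hlogN
    _ ≤ (B + ε) * (x * Real.log 2) := by linarith
  
include hb hbB hBd in
lemma gfun_ev_ge (ε : ℝ) (hε : 0 < ε) :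
    ∀ᶠ δ in 𝓝[>] (0:ℝ), b - ε ≤ gfun d b B δ := by
  have hd0 : (0:ℝ) < d := by linarith
  set x₀ : ℝ := 3*b/ε + 1 with hx₀
  have hx₀0 : 0 < x₀ := by positivity
  apply eventually_nhdsGT (show (0:ℝ) < min 2⁻¹ (Real.exp (-(x₀ * Real.log 2))) by positivity)
  intro δ hδ0 hδsm
  have hδ1 : δ < 1 := lt_of_lt_of_le (lt_of_lt_of_le hδsm (min_le_left _ _)) (by norm_num)
  have hL : 0 < -Real.log δ := by
    have := Real.log_neg hδ0 hδ1
    linarith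
  set x : ℝ := -Real.log δ / Real.log 2 with hx
  have hx0 : 0 < x := by rw [hx]; positivity
  have hxL : x * Real.log 2 = -Real.log δ := by
    rw [hx]; field_simp
  have hxbig : x₀ < x := by
    have h1 : δ < Real.exp (-(x₀ * Real.log 2)) :=
      lt_of_lt_of_le hδsm (min_le_right _ _)
    have h2 : Real.log δ < -(x₀ * Real.log 2) := by
      calc Real.log δ < Real.log (Real.exp (-(x₀ * Real.log 2))) :=
            Real.log_lt_log hδ0 h1
        _ = -(x₀ * Real.log 2) := Real.log_exp _
    have h3 : x₀ * Real.log 2 < x * Real.log 2 := by rw [hxL]; linarith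
    exact lt_of_mul_lt_mul_right h3 (le_of_lt log2_pos)
  have hceil1 : 1 ≤ ⌈x⌉₊ := by
    rw [Nat.one_le_iff_ne_zero, ← Nat.pos_iff_ne_zero, Nat.ceil_pos]
    exact hx0
  set M : ℕ := ⌈x⌉₊ - 1 with hM
  have hMcast : (M:ℝ) = (⌈x⌉₊ : ℝ) - 1 := by
    rw [hM]
    push_cast [Nat.cast_sub hceil1]
    ring
  have hMlt : (M:ℝ) < x := by
    have := Nat.ceil_lt_add_one (le_of_lt hx0)
    rw [hMcast]
    linarith
  have hMge : x - 2 ≤ (M:ℝ) := by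
    have := Nat.le_ceil x
    rw [hMcast]
    linarith
  have hδM : δ < ((2:ℝ)⁻¹)^M := by
    rw [delta_lt_pow_iff hδ0, ← hxL]
    nlinarith [log2_pos, hMlt]
  have hlogN := le_logN hb hbB hBd hδ0 M hδM
  have hG1 := G1 hb hbB hBd (d := d) (b := b) (B := B) M
  unfold gfun
  rw [le_div_iff₀ hL, ← hxL]
  have h5 : (b * (M:ℝ) - b) * Real.log 2 ≤ ((d:ℝ) * cnt d b B M) * Real.log 2 := by
    apply mul_le_mul_of_nonneg_right _ (le_of_lt log2_pos)
    linarith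
  have h6 : (b - ε) * (x * Real.log 2) ≤ (b * (M:ℝ) - b) * Real.log 2 := by
    apply le_trans _ (mul_le_mul_of_nonneg_right
      (show b*(x-2) - b ≤ b * (M:ℝ) - b by nlinarith [hMge, hb]) (le_of_lt log2_pos))
    have h7 : (b - ε) * x ≤ b*(x-2) - b := by
      have h8 : ε * x ≥ ε * x₀ := mul_le_mul_of_nonneg_left (le_of_lt hxbig) (le_of_lt hε)
      have h9 : ε * x₀ = 3*b + ε := by
        rw [hx₀]
        field_simp
        try ring
      nlinarith
    nlinarith [log2_pos, h7]
  linarith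

include hb hbB hBd in
lemma gfun_freq_le (ε : ℝ) (hε : 0 < ε) :
    ∃ᶠ δ in 𝓝[>] (0:ℝ), gfun d b B δ ≤ b + ε := by
  have hd0 : (0:ℝ) < d := by linarith
  apply frequently_nhdsGT (useq d b B)
    (fun k => by have := useq_ge hb hbB hBd (d := d) (B := B) k; omega)
  rw [Filter.frequently_atTop]
  intro K
  obtain ⟨k, hk⟩ := exists_nat_ge ((d:ℝ)*(d:ℝ)/ε)
  refine ⟨max K k, le_max_left _ _, ?_⟩
  set u : ℕ := useq d b B (max K k) with hu
  have hu1 : 1 ≤ u := useq_pos hb hbB hBd _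
  have huk : (k:ℝ) ≤ (u:ℝ) := by
    have h1 := useq_ge hb hbB hBd (d := d) (B := B) (max K k)
    have h2 : k ≤ u := by omega
    exact_mod_cast h2
  have hu0 : (0:ℝ) < (u:ℝ) := by exact_mod_cast hu1
  have hδ0 : (0:ℝ) < ((2:ℝ)⁻¹)^u := by positivity
  have hL : -Real.log (((2:ℝ)⁻¹)^u) = (u:ℝ) * Real.log 2 := by
    rw [log_pow_half]; ring
  have hLpos : (0:ℝ) < (u:ℝ) * Real.log 2 := by positivity
  have hcov : Real.sqrt d * ((2:ℝ)⁻¹)^(u + d) ≤ ((2:ℝ)⁻¹)^u := sqrtd_mul_pow_le u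
  have hlogN := logN_le hb hbB hBd hδ0 (u + d) hcov
  have hcnt : cnt d b B (u + d) ≤ cnt d b B u + d := cnt_add_le u d
  have hcu : cnt d b B u = cseq d b B (max K k) := cnt_useq hb hbB hBd _
  have hI1u := I1 hb (d := d) (B := B) (max K k)
  unfold gfun
  rw [hL, div_le_iff₀ hLpos]
  have h5 : ((d:ℝ) * cnt d b B (u + d)) * Real.log 2
      ≤ ((d:ℝ) * cnt d b B u + (d:ℝ)*(d:ℝ)) * Real.log 2 := by
    apply mul_le_mul_of_nonneg_right _ (le_of_lt log2_pos)
    have h6 : (cnt d b B (u+d) : ℝ) ≤ (cnt d b B u : ℝ) + d := by exact_mod_cast hcnt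
    nlinarith [hd0]
  have h7 : ((d:ℝ) * cnt d b B u + (d:ℝ)*(d:ℝ)) ≤ b * u + (d:ℝ)*(d:ℝ) := by
    rw [hcu]
    rw [← hu] at hI1u
    linarith
  have h8 : (d:ℝ)*(d:ℝ) ≤ ε * u := by
    have h9 : (d:ℝ)*(d:ℝ)/ε ≤ (u:ℝ) := le_trans hk huk
    rw [div_le_iff₀ hε] at h9
    linarith
  have h10 : ((d:ℝ) * cnt d b B (u + d)) * Real.log 2 ≤ ((b + ε) * u) * Real.log 2 := by
    have := mul_le_mul_of_nonneg_right (le_trans h7 (by linarith : b * (u:ℝ) + (d:ℝ)*(d:ℝ) ≤ (b + ε) * u)) (le_of_lt log2_pos)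
    linarith
  calc Real.log (coverN (CC d b B) (((2:ℝ)⁻¹)^u)) ≤ ((d:ℝ) * cnt d b B (u+d)) * Real.log 2 := hlogN
    _ ≤ (b + ε) * ((u:ℝ) * Real.log 2) := by linarith

set_option maxHeartbeats 1000000 in
include hb hbB hBd in
lemma gfun_freq_ge (ε : ℝ) (hε : 0 < ε) :
    ∃ᶠ δ in 𝓝[>] (0:ℝ), B - ε ≤ gfun d b B δ := by
  have hd0 : (0:ℝ) < d := by linarith
  apply frequently_nhdsGT (vseq d b B)
    (fun k => by
      have h1 := useq_ge hb hbB hBd (d := d) (B := B) k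
      have h2 := useq_lt_vseq hb hbB hBd (d := d) (B := B) k
      omega)
  rw [Filter.frequently_atTop]
  intro K
  obtain ⟨k1, hk1⟩ := exists_nat_ge (2*(B-b)/ε)
  obtain ⟨k2, hk2⟩ := exists_nat_ge (2*(d:ℝ)/ε)
  refine ⟨max K (max k1 k2), le_max_left _ _, ?_⟩
  set k : ℕ := max K (max k1 k2) with hkdef
  set v : ℕ := vseq d b B k with hv
  have hv1 : 1 ≤ v := by
    have h1 := useq_pos hb hbB hBd (d := d) (B := B) k
    have h2 := useq_lt_vseq hb hbB hBd (d := d) (B := B) k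
    omega
  have hvk : (k:ℝ) ≤ (v:ℝ) := by
    have h1 := useq_ge hb hbB hBd (d := d) (B := B) k
    have h2 := useq_lt_vseq hb hbB hBd (d := d) (B := B) k
    have h3 : k ≤ v := by omega
    exact_mod_cast h3
  have hv0 : (0:ℝ) < (v:ℝ) := by exact_mod_cast hv1
  have hδ0 : (0:ℝ) < ((2:ℝ)⁻¹)^v := by positivity
  have hL : -Real.log (((2:ℝ)⁻¹)^v) = (v:ℝ) * Real.log 2 := by
    rw [log_pow_half]; ring
  have hLpos : (0:ℝ) < (v:ℝ) * Real.log 2 := by positivity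
  have hδM : ((2:ℝ)⁻¹)^v < ((2:ℝ)⁻¹)^(v-1) := by
    apply pow_lt_pow_right_of_lt_one₀ (by norm_num) (by norm_num)
    omega
  have hlogN := le_logN hb hbB hBd hδ0 (v-1) hδM
  have hcnt : cnt d b B v ≤ cnt d b B (v-1) + 1 := by
    have h1 := cnt_add_le (d := d) (b := b) (B := B) (v-1) 1
    have h2 : v - 1 + 1 = v := by omega
    rw [h2] at h1
    exact h1
  have hcv : cnt d b B v = cseq d b B (k+1) := cnt_vseq hb hbB hBd _
  have hI3v := I3 hb hbB hBd (d := d) (b := b) (B := B) k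
  have hcnt' : Bk b B k * v - (d:ℝ) ≤ (d:ℝ) * cnt d b B (v-1) := by
    have h1 : (cnt d b B v : ℝ) ≤ (cnt d b B (v-1) : ℝ) + 1 := by exact_mod_cast hcnt
    rw [hcv] at h1
    rw [← hv] at hI3v
    nlinarith [hd0]
  have hBk : B - ε/2 ≤ Bk b B k := by
    unfold Bk
    have hk2' : (0:ℝ) < (k:ℝ) + 2 := by positivity
    have h1 : (k1:ℝ) ≤ (k:ℝ) := by
      have : k1 ≤ k := le_trans (le_max_left _ _) (le_max_right _ _)
      exact_mod_cast this
    have h2 : (B - b)/((k:ℝ)+2) ≤ ε/2 := by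
      rw [div_le_iff₀ hk2']
      rw [div_le_iff₀ hε] at hk1
      nlinarith [hε]
    linarith
  have hdv : (d:ℝ) ≤ ε/2 * (v:ℝ) := by
    have h1 : (k2:ℝ) ≤ (v:ℝ) := by
      have h2 : k2 ≤ k := le_trans (le_max_right _ _) (le_max_right _ _)
      have h3 : (k2:ℝ) ≤ (k:ℝ) := by exact_mod_cast h2
      linarith
    rw [div_le_iff₀ hε] at hk2
    have h4 : ε/2 * (k2:ℝ) ≤ ε/2 * (v:ℝ) :=
      mul_le_mul_of_nonneg_left h1 (by linarith)
    linarith only [hk2, h4]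
  unfold gfun
  rw [hL, le_div_iff₀ hLpos]
  have h5 : (B - ε) * (v:ℝ) ≤ (d:ℝ) * cnt d b B (v-1) := by
    have h6 : (B - ε/2) * (v:ℝ) ≤ Bk b B k * (v:ℝ) :=
      mul_le_mul_of_nonneg_right hBk (le_of_lt hv0)
    have h7 : (B - ε) * (v:ℝ) ≤ (B - ε/2) * (v:ℝ) - (d:ℝ) := by
      linarith only [hdv]
    linarith only [h6, h7, hcnt']
  have h8 := mul_le_mul_of_nonneg_right h5 (le_of_lt log2_pos)
  calc (B - ε) * ((v:ℝ) * Real.log 2) ≤ ((d:ℝ) * cnt d b B (v-1)) * Real.log 2 := by linarith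
    _ ≤ Real.log (coverN (CC d b B) (((2:ℝ)⁻¹)^v)) := hlogN

include hb hbB hBd in
lemma lbDim_CC : lbDim (CC d b B) = b := by
  have hB0 : (0:ℝ) < B := by linarith
  apply real_liminf_eq
  · exact fun ε hε => gfun_ev_ge hb hbB hBd ε hε
  · exact fun ε hε => gfun_freq_le hb hbB hBd ε hε
  · exact eventually_nhdsGT (by norm_num : (0:ℝ) < 1)
      (fun δ h1 h2 => gfun_nonneg hb hbB hBd h1 h2)
  · exact ⟨B + 1, gfun_ev_le hb hbB hBd 1 (by norm_num)⟩

include hb hbB hBd in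
lemma ubDim_CC : ubDim (CC d b B) = B := by
  apply real_limsup_eq
  · exact fun ε hε => gfun_ev_le hb hbB hBd ε hε
  · exact fun ε hε => gfun_freq_ge hb hbB hBd ε hε
  · exact eventually_nhdsGT (by norm_num : (0:ℝ) < 1)
      (fun δ h1 h2 => gfun_nonneg hb hbB hBd h1 h2)
  · exact ⟨B + 1, gfun_ev_le hb hbB hBd 1 (by norm_num)⟩

end analytic

section cresec
variable {d : ℕ} {b B : ℝ}

lemma cre_zero_mem (d : ℕ) (b B : ℝ) {t δ : ℝ} (hδ0 : 0 < δ) (hδ1 : δ < 1) :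
    (0:ℝ) ∈ {p : ℝ | 0 ≤ p ∧ p ≤ 1 ∧
      δ ^ (-(p * t)) ≤ ((coverN (CC d b B) (δ ^ p) : ℕ) : ℝ)} := by
  refine ⟨le_refl 0, zero_le_one, ?_⟩
  rw [zero_mul, neg_zero, Real.rpow_zero]
  have h1 := one_le_coverN d b B 1 one_pos
  exact_mod_cast h1

lemma cre_bddAbove (d : ℕ) (b B : ℝ) (t δ : ℝ) :
    BddAbove {p : ℝ | 0 ≤ p ∧ p ≤ 1 ∧
      δ ^ (-(p * t)) ≤ ((coverN (CC d b B) (δ ^ p) : ℕ) : ℝ)} :=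
  ⟨1, fun p hp => hp.2.1⟩

lemma cre_nonneg (d : ℕ) (b B : ℝ) {t δ : ℝ} (hδ0 : 0 < δ) (hδ1 : δ < 1) :
    0 ≤ cre (CC d b B) t δ :=
  le_csSup (cre_bddAbove d b B t δ) (cre_zero_mem d b B hδ0 hδ1)

lemma cre_le_one (d : ℕ) (b B : ℝ) {t δ : ℝ} (hδ0 : 0 < δ) (hδ1 : δ < 1) :
    cre (CC d b B) t δ ≤ 1 :=
  csSup_le ⟨0, cre_zero_mem d b B hδ0 hδ1⟩ (fun p hp => hp.2.1)

variable (hb : 0 < b) (hbB : b < B) (hBd : B ≤ (d : ℝ))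

set_option maxHeartbeats 1000000 in
include hb hbB hBd in
lemma creT_ev_ge {t : ℝ} (ht : b < t) (htB : t < B) (ε : ℝ) (hε : 0 < ε) :
    ∀ᶠ δ in 𝓝[>] (0:ℝ), Pc d b t - ε ≤ cre (CC d b B) t δ := by
  have ht0 : 0 < t := lt_trans hb ht
  have htd : t < (d:ℝ) := lt_of_lt_of_le htB hBd
  have hd0 : (0:ℝ) < d := by linarith
  rcases le_or_gt (Pc d b t) ε with hPε | hPε
  · apply eventually_nhdsGT (by norm_num : (0:ℝ) < 1)
    intro δ h1 h2
    have h3 := cre_nonneg d b B (t := t) h1 h2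
    linarith
  · have hPc1 := Pc_le_one (d := d) hb ht htd
    obtain ⟨K, hK1, hK⟩ := CL1 hb hbB hBd ht htB (half_pos hε)
    set x₀ : ℝ := max ((K:ℝ)+1) (2/ε) with hx₀
    have hx₀0 : 0 < x₀ := lt_of_lt_of_le (by positivity) (le_max_left _ _)
    apply eventually_nhdsGT
      (show (0:ℝ) < min 2⁻¹ (Real.exp (-(x₀ * Real.log 2))) by positivity)
    intro δ hδ0 hδsm
    have hδ1 : δ < 1 := lt_of_lt_of_le (lt_of_lt_of_le hδsm (min_le_left _ _)) (by norm_num)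
    have hL : 0 < -Real.log δ := by
      have := Real.log_neg hδ0 hδ1
      linarith
    set x : ℝ := -Real.log δ / Real.log 2 with hx
    have hx0 : 0 < x := by rw [hx]; positivity
    have hxL : x * Real.log 2 = -Real.log δ := by rw [hx]; field_simp
    have hlogδ : Real.log δ = -(x * Real.log 2) := by rw [hxL]; ring
    have hxbig : x₀ < x := by
      have h1 : δ < Real.exp (-(x₀ * Real.log 2)) :=
        lt_of_lt_of_le hδsm (min_le_right _ _)
      have h2 : Real.log δ < -(x₀ * Real.log 2) := by
        calc Real.log δ < Real.log (Real.exp (-(x₀ * Real.log 2))) :=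
              Real.log_lt_log hδ0 h1
          _ = -(x₀ * Real.log 2) := Real.log_exp _
      have h3 : x₀ * Real.log 2 < x * Real.log 2 := by rw [hxL]; linarith
      exact lt_of_mul_lt_mul_right h3 (le_of_lt log2_pos)
    set n : ℕ := ⌊x⌋₊ with hn
    have hnx : (n:ℝ) ≤ x := Nat.floor_le (le_of_lt hx0)
    have hxn : x - 1 ≤ (n:ℝ) := by
      have := Nat.lt_floor_add_one x
      linarith
    have hnK : K ≤ n := by
      have h1 : ((K:ℝ)+1) ≤ x := le_trans (le_max_left _ (2/ε)) (le_of_lt hxbig)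
      have h2 : (K+1 : ℕ) ≤ n := Nat.le_floor (by push_cast; linarith)
      omega
    obtain ⟨m, hm1, hmn, hmP, hmcnt⟩ := hK n hnK
    have hcnt1 : cnt d b B m ≤ cnt d b B (m-1) + 1 := by
      have h1 := cnt_add_le (d := d) (b := b) (B := B) (m-1) 1
      have h2 : m - 1 + 1 = m := by omega
      rw [h2] at h1
      exact h1
    have hcnt' : t * (m:ℝ) ≤ (d:ℝ) * cnt d b B (m-1) := by
      have h1 : (cnt d b B m : ℝ) ≤ (cnt d b B (m-1) : ℝ) + 1 := by exact_mod_cast hcnt1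
      nlinarith [hmcnt, hd0]
    have hmm : ((2:ℝ)⁻¹)^m < ((2:ℝ)⁻¹)^(m-1) := by
      apply pow_lt_pow_right_of_lt_one₀ (by norm_num) (by norm_num)
      omega
    have hN := le_coverN_CC d b B (m-1) (((2:ℝ)⁻¹)^m) (by positivity) hmm
    set p : ℝ := (m:ℝ)/x with hp
    have hp0 : 0 ≤ p := by positivity
    have hp1 : p ≤ 1 := by
      rw [hp, div_le_one hx0]
      have h1 : (m:ℝ) ≤ (n:ℝ) := by exact_mod_cast hmn
      linarith
    have hpx : p * x = (m:ℝ) := by rw [hp]; field_simp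
    have hδp : δ ^ p = ((2:ℝ)⁻¹)^m := by
      rw [Real.rpow_def_of_pos hδ0, hlogδ, pow_half_eq_exp]
      congr 1
      rw [← hpx]
      ring
    have hδpt : δ ^ (-(p * t)) = Real.exp ((m:ℝ) * t * Real.log 2) := by
      rw [Real.rpow_def_of_pos hδ0, hlogδ]
      congr 1
      rw [← hpx]
      ring
    have hmem : p ∈ {q : ℝ | 0 ≤ q ∧ q ≤ 1 ∧
        δ ^ (-(q * t)) ≤ ((coverN (CC d b B) (δ ^ q) : ℕ) : ℝ)} := by
      refine ⟨hp0, hp1, ?_⟩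
      rw [hδp, hδpt]
      set k0 : ℕ := d * cnt d b B (m-1) with hk0
      have e2 : Real.exp ((m:ℝ)*t*Real.log 2) ≤ Real.exp ((k0:ℝ) * Real.log 2) := by
        rw [Real.exp_le_exp]
        apply mul_le_mul_of_nonneg_right _ (le_of_lt log2_pos)
        rw [hk0]
        push_cast
        linarith [hcnt']
      have e3 : Real.exp ((k0:ℝ) * Real.log 2) = ((2:ℝ))^k0 := by
        have h1 : Real.log ((2:ℝ)^k0) = (k0:ℝ) * Real.log 2 := by rw [Real.log_pow]
        rw [← h1, Real.exp_log (by positivity)]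
      have e4 : ((2:ℝ))^k0 ≤ ((coverN (CC d b B) (((2:ℝ)⁻¹)^m) : ℕ) : ℝ) := by
        have h1 := (Nat.cast_le (α := ℝ)).2 hN
        push_cast at h1
        exact h1
      calc Real.exp ((m:ℝ)*t*Real.log 2) ≤ Real.exp ((k0:ℝ) * Real.log 2) := e2
        _ = ((2:ℝ))^k0 := e3
        _ ≤ _ := e4
    have hcre : p ≤ cre (CC d b B) t δ := le_csSup (cre_bddAbove d b B t δ) hmem
    have hfinal : Pc d b t - ε ≤ p := by
      rw [hp, le_div_iff₀ hx0]
      have c1 : (1:ℝ) ≤ (ε/2) * x := by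
        have h1 : 2/ε ≤ x := le_trans (le_max_right _ _) (le_of_lt hxbig)
        have h2 : (ε/2) * (2/ε) ≤ (ε/2) * x :=
          mul_le_mul_of_nonneg_left h1 (by positivity)
        have h3 : (ε/2) * (2/ε) = 1 := by field_simp
        linarith
      have c2 : (Pc d b t - ε/2) * (x - 1) ≤ (m:ℝ) := by
        have q1 : (Pc d b t - ε/2) * (x-1) ≤ (Pc d b t - ε/2) * (n:ℝ) :=
          mul_le_mul_of_nonneg_left hxn (by linarith)
        linarith [hmP]
      nlinarith [c1, c2, hPc1]
    linarith [hcre, hfinal]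

set_option maxHeartbeats 1000000 in
include hb hbB hBd in
lemma creT_freq_le {t : ℝ} (ht : b < t) (htB : t < B) (ε : ℝ) (hε : 0 < ε) :
    ∃ᶠ δ in 𝓝[>] (0:ℝ), cre (CC d b B) t δ ≤ Pc d b t + ε := by
  have ht0 : 0 < t := lt_trans hb ht
  have htd : t < (d:ℝ) := lt_of_lt_of_le htB hBd
  have hd0 : (0:ℝ) < d := by linarith
  rcases le_or_gt 1 (Pc d b t + ε) with hP1 | hP1
  · apply Filter.Eventually.frequently
    apply eventually_nhdsGT (by norm_num : (0:ℝ) < 1)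
    intro δ h1 h2
    have h3 := cre_le_one d b B (t := t) h1 h2
    linarith
  · apply frequently_nhdsGT (fun n => n) (fun n => le_refl n)
    rw [Filter.frequently_atTop]
    intro K
    obtain ⟨n, hnK, hn1, hprop⟩ := CL2 hb hbB hBd ht htB hε (le_of_lt hP1) K
    refine ⟨n, hnK, ?_⟩
    set δ : ℝ := ((2:ℝ)⁻¹)^n with hδdef
    have hδ0 : (0:ℝ) < δ := by positivity
    have hδ1 : δ < 1 := by
      rw [hδdef]
      calc ((2:ℝ)⁻¹)^n ≤ ((2:ℝ)⁻¹)^1 :=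
            pow_le_pow_of_le_one (by norm_num) (by norm_num) hn1
        _ < 1 := by norm_num
    have hn0 : (0:ℝ) < (n:ℝ) := by exact_mod_cast hn1
    have hlogδ : Real.log δ = -((n:ℝ) * Real.log 2) := by
      rw [hδdef, log_pow_half]
    apply csSup_le ⟨0, cre_zero_mem d b B hδ0 hδ1⟩
    rintro p ⟨hp0, hp1, hpcond⟩
    by_contra hcon
    push_neg at hcon
    set y : ℝ := p * n with hy
    have hy0 : 0 ≤ y := by positivity
    have hyn : y ≤ (n:ℝ) := by
      rw [hy]
      nlinarith
    have hδp : δ ^ p = Real.exp (-(y * Real.log 2)) := by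
      rw [Real.rpow_def_of_pos hδ0, hlogδ]
      congr 1
      rw [hy]; ring
    set m' : ℕ := ⌈y⌉₊ + d with hm'
    have hcy : y ≤ (⌈y⌉₊ : ℝ) := Nat.le_ceil y
    have hcy2 : (⌈y⌉₊ : ℝ) < y + 1 := Nat.ceil_lt_add_one hy0
    have hcov : Real.sqrt d * ((2:ℝ)⁻¹)^m' ≤ δ ^ p := by
      rw [hm']
      apply le_trans (sqrtd_mul_pow_le ⌈y⌉₊)
      rw [hδp, pow_half_eq_exp, Real.exp_le_exp]
      nlinarith [log2_pos, hcy]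
    have hN := coverN_CC_le d b B m' (δ ^ p) hcov
    have hyt : y * t ≤ (d:ℝ) * cnt d b B m' := by
      have e1 : δ ^ (-(p * t)) = Real.exp (y * t * Real.log 2) := by
        rw [Real.rpow_def_of_pos hδ0, hlogδ]
        congr 1
        rw [hy]; ring
      set k0 : ℕ := d * cnt d b B m' with hk0
      have e4 : ((coverN (CC d b B) (δ ^ p) : ℕ) : ℝ) ≤ ((2:ℝ))^k0 := by
        have h1 := (Nat.cast_le (α := ℝ)).2 hN
        push_cast at h1
        exact h1
      have e3 : ((2:ℝ))^k0 = Real.exp ((k0:ℝ) * Real.log 2) := by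
        have h1 : Real.log ((2:ℝ)^k0) = (k0:ℝ) * Real.log 2 := by rw [Real.log_pow]
        rw [← h1, Real.exp_log (by positivity)]
      have e5 : Real.exp (y * t * Real.log 2) ≤ Real.exp ((k0:ℝ) * Real.log 2) := by
        calc Real.exp (y * t * Real.log 2) = δ ^ (-(p * t)) := e1.symm
          _ ≤ ((coverN (CC d b B) (δ ^ p) : ℕ) : ℝ) := hpcond
          _ ≤ ((2:ℝ))^k0 := e4
          _ = Real.exp ((k0:ℝ) * Real.log 2) := e3
      rw [Real.exp_le_exp] at e5
      have e6 : y * t ≤ (k0:ℝ) := le_of_mul_le_mul_right (by linarith) log2_pos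
      rw [hk0] at e6
      push_cast at e6
      linarith
    have hm'1 : (Pc d b t + ε) * n ≤ (m':ℝ) := by
      have h1 : (Pc d b t + ε) * n ≤ y := by
        rw [hy]
        nlinarith [hcon, hn0]
      have h2 : (m' : ℝ) = (⌈y⌉₊ : ℝ) + d := by rw [hm']; push_cast; ring
      linarith
    have hm'2 : (m':ℝ) ≤ (n:ℝ) + d + 1 := by
      have h1 : ⌈y⌉₊ ≤ n := Nat.ceil_le.2 hyn
      have h2 : (m' : ℝ) = (⌈y⌉₊ : ℝ) + d := by rw [hm']; push_cast; ring
      have h3 : (⌈y⌉₊ : ℝ) ≤ (n:ℝ) := by exact_mod_cast h1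
      linarith
    have hfail := hprop m' hm'1 hm'2
    have hm'cast : (m' : ℝ) = (⌈y⌉₊ : ℝ) + d := by rw [hm']; push_cast; ring
    rw [hm'cast] at hfail
    nlinarith [hyt, hfail, hcy2, ht0]

include hb hbB hBd in
lemma creT_CC {t : ℝ} (ht : b < t) (htB : t < B) :
    creT (CC d b B) t = Pc d b t := by
  apply real_liminf_eq
  · exact fun ε hε => creT_ev_ge hb hbB hBd ht htB ε hε
  · exact fun ε hε => creT_freq_le hb hbB hBd ht htB ε hε
  · exact eventually_nhdsGT (by norm_num : (0:ℝ) < 1)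
      (fun δ h1 h2 => cre_nonneg d b B h1 h2)
  · exact ⟨1, eventually_nhdsGT (by norm_num : (0:ℝ) < 1)
      (fun δ h1 h2 => cre_le_one d b B h1 h2)⟩

end cresec

end
end CREWork

theorem exists_condensation_with_extremal_creT
    (d : ℕ) (b B : ℝ) (hb : 0 < b) (hbB : b < B) (hBd : B ≤ (d : ℝ)) :
    ∃ C : Set (EuclideanSpace ℝ (Fin d)),
      C ⊆ {x : EuclideanSpace ℝ (Fin d) | ∀ i, x i ∈ Set.Icc (0 : ℝ) 1} ∧
      IsCompact C ∧ lbDim C = b ∧ ubDim C = B ∧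
      ∀ t : ℝ, t ∈ Set.Ioo b B →
        creT C t = (b / t) * (((d : ℝ) - t) / ((d : ℝ) - b)) := by
  refine ⟨CREWork.CC d b B, CREWork.CC_subset_cube d b B, CREWork.isCompact_CC d b B,
    CREWork.lbDim_CC hb hbB hBd, CREWork.ubDim_CC hb hbB hBd, ?_⟩
  intro t ht
  have h := CREWork.creT_CC hb hbB hBd ht.1 ht.2
  rw [h]
  rfl
end
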